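/- arXiv:2109.11144 — 7 statements merged into one kernel-verified Lean document; each statement's English description precedes it below -/
import Mathlib

section
/- For a quantum channel N: CPTP(A→B), cv(N) = 1 if and only if N is a replacer channel, i.e., there exists a fixed state σ such that N(ρ) = σ for all density operators ρ. -/
open scoped BigOperators Kronecker ComplexOrder
open Matrix

noncomputable section

/-- A density operator: positive semidefinite with unit trace. -/
def IsDensity {ι : Type*} [Fintype ι] (ρ : Matrix ι ι ℂ) : Prop :=
  ρ.PosSemidef ∧ ρ.trace = 1

/-- A separable bipartite positive operator: a nonnegative combination of
tensor products of positive operators. -/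
def IsSep {ιA ιB : Type*} [Fintype ιA] [Fintype ιB]
    (Ω : Matrix (ιA × ιB) (ιA × ιB) ℂ) : Prop :=
  ∃ (n : ℕ) (a : Fin n → Matrix ιA ιA ℂ) (b : Fin n → Matrix ιB ιB ℂ),
    (∀ i, (a i).PosSemidef) ∧ (∀ i, (b i).PosSemidef) ∧
      Ω = ∑ i, a i ⊗ₖ b i

/-- Partial trace over the first (A) system. -/
def ptraceA {ιA ιB : Type*} [Fintype ιA]
    (Ω : Matrix (ιA × ιB) (ιA × ιB) ℂ) : Matrix ιB ιB ℂ :=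
  Matrix.of fun k l => ∑ i, Ω (i, k) (i, l)

/-- The Choi matrix of a linear map on matrices. -/
def choi {ιA ιB : Type*} [Fintype ιA] [DecidableEq ιA]
    (Φ : Matrix ιA ιA ℂ →ₗ[ℂ] Matrix ιB ιB ℂ) :
    Matrix (ιA × ιB) (ιA × ιB) ℂ :=
  Matrix.of fun p q => Φ (Matrix.single p.1 q.1 1) p.2 q.2

/-- A quantum channel: a completely positive (Choi matrix PSD) trace-preserving
linear map. -/
structure Channel (ιA ιB : Type*) [Fintype ιA] [DecidableEq ιA] [Fintype ιB] where
  map : Matrix ιA ιA ℂ →ₗ[ℂ] Matrix ιB ιB ℂ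
  cp : (choi map).PosSemidef
  tp : ∀ X, (map X).trace = X.trace

/-- The communication value, via the conic program over the separable cone:
`cv(N) = max { Tr[Ω J_N] : Ω separable, Tr_A Ω = I }`. -/
def cv {ιA ιB : Type*} [Fintype ιA] [DecidableEq ιA] [Fintype ιB] [DecidableEq ιB]
    (N : Channel ιA ιB) : ℝ :=
  sSup {r | ∃ Ω : Matrix (ιA × ιB) (ιA × ιB) ℂ,
    IsSep Ω ∧ ptraceA Ω = 1 ∧ r = ((Ω * choi N.map).trace).re}

/-- The operational communication value: supremum over finite families of input
states and POVMs of `∑_x Tr[Π_x N(ρ_x)]`. -/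
def cvOp {ιA ιB : Type*} [Fintype ιA] [DecidableEq ιA] [Fintype ιB] [DecidableEq ιB]
    (N : Channel ιA ιB) : ℝ :=
  sSup {r | ∃ (n : ℕ) (ρ : Fin n → Matrix ιA ιA ℂ) (E : Fin n → Matrix ιB ιB ℂ),
    (∀ x, IsDensity (ρ x)) ∧ (∀ x, (E x).PosSemidef) ∧ (∑ x, E x) = 1 ∧
      r = (∑ x, (E x * N.map (ρ x)).trace).re}

/-- Maximal overlap of a bipartite operator with product unit vectors
(`Λ²`, exponential of minus the geometric measure of entanglement). -/
def lam2 {ιA ιB : Type*} [Fintype ιA] [Fintype ιB]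
    (ω : Matrix (ιA × ιB) (ιA × ιB) ℂ) : ℝ :=
  sSup {r | ∃ (a : ιA → ℂ) (b : ιB → ℂ),
    (∑ i, ‖a i‖ ^ 2) = 1 ∧ (∑ k, ‖b k‖ ^ 2) = 1 ∧
      r = (star (fun p : ιA × ιB => a p.1 * b p.2) ⬝ᵥ
        ω *ᵥ fun p : ιA × ιB => a p.1 * b p.2).re}

end

section Aux

/-- Entrywise formula for a linear map on matrices in terms of its Choi matrix. -/
lemma channel_apply_entry {dA dB : ℕ} (N : Channel (Fin dA) (Fin dB))
    (ρ : Matrix (Fin dA) (Fin dA) ℂ) (k l : Fin dB) :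
    N.map ρ k l = ∑ i, ∑ j, ρ i j * choi N.map (i, k) (j, l) := by
  conv_lhs => rw [matrix_eq_sum_single ρ]
  rw [map_sum, Matrix.sum_apply]
  refine Finset.sum_congr rfl fun i _ => ?_
  rw [map_sum, Matrix.sum_apply]
  refine Finset.sum_congr rfl fun j _ => ?_
  have h : Matrix.single i j (ρ i j) = ρ i j • Matrix.single i j 1 := by
    rw [smul_single, smul_eq_mul, mul_one]
  rw [h, _root_.map_smul, Matrix.smul_apply, smul_eq_mul, choi, Matrix.of_apply]

open scoped MatrixOrder Matrix.Norms.L2Operator in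
/-- A channel (CP map) sends PSD matrices to PSD matrices. -/
lemma channel_posSemidef {dA dB : ℕ} (N : Channel (Fin dA) (Fin dB))
    {ρ : Matrix (Fin dA) (Fin dA) ℂ} (hρ : ρ.PosSemidef) :
    (N.map ρ).PosSemidef := by
  set B := CFC.sqrt ρ with hB
  have hBB : B * B = ρ := CFC.sqrt_mul_sqrt_self ρ hρ.nonneg
  have hBH : B.IsHermitian := (CFC.sqrt_nonneg ρ).posSemidef.isHermitian
  set C : Fin dA → Matrix (Fin dA × Fin dB) (Fin dB) ℂ :=
    fun m => Matrix.of fun p l => star (B p.1 m) * (if p.2 = l then 1 else 0) with hC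
  have key : N.map ρ = ∑ m, (C m)ᴴ * choi N.map * (C m) := by
    ext k l
    rw [channel_apply_entry, Matrix.sum_apply]
    have hterm : ∀ m, ((C m)ᴴ * choi N.map * (C m)) k l
        = ∑ i, ∑ j, (B i m * star (B j m)) * choi N.map (i, k) (j, l) := by
      intro m
      simp only [Matrix.mul_apply, Matrix.conjTranspose_apply, hC, Matrix.of_apply,
        star_mul', star_star, apply_ite (star : ℂ → ℂ), star_one, star_zero]
      rw [Fintype.sum_prod_type]
      simp only [Fintype.sum_prod_type, Finset.sum_mul, Finset.mul_sum, mul_ite, ite_mul,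
        mul_one, mul_zero, zero_mul, one_mul, Finset.sum_ite_eq', Finset.mem_univ, if_true]
      rw [Finset.sum_comm]
      refine Finset.sum_congr rfl fun i _ => Finset.sum_congr rfl fun j _ => ?_
      ring
    refine Eq.symm ?_
    calc ∑ m, ((C m)ᴴ * choi N.map * (C m)) k l
        = ∑ m, ∑ i, ∑ j, (B i m * star (B j m)) * choi N.map (i, k) (j, l) :=
          Finset.sum_congr rfl fun m _ => hterm m
      _ = ∑ i, ∑ j, ∑ m, (B i m * star (B j m)) * choi N.map (i, k) (j, l) := by
          rw [Finset.sum_comm]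
          exact Finset.sum_congr rfl fun i _ => Finset.sum_comm
      _ = ∑ i, ∑ j, ρ i j * choi N.map (i, k) (j, l) := by
          refine Finset.sum_congr rfl fun i _ => Finset.sum_congr rfl fun j _ => ?_
          rw [← Finset.sum_mul]
          congr 1
          calc ∑ m, B i m * star (B j m) = ∑ m, B i m * B m j := by
                refine Finset.sum_congr rfl fun m _ => ?_
                congr 1
                have := congrFun (congrFun hBH m) j
                rwa [Matrix.conjTranspose_apply] at this
            _ = ρ i j := by rw [← Matrix.mul_apply, hBB]
  rw [key]
  refine Finset.sum_induction _ _ (fun a b ha hb => ha.add hb) Matrix.PosSemidef.zero ?_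
  exact fun m _ => N.cp.conjTranspose_mul_mul_same (C m)

/-- The maximally mixed state is a density operator. -/
lemma maxMixed_isDensity {dA : ℕ} (hA : 0 < dA) :
    IsDensity ((dA : ℂ)⁻¹ • (1 : Matrix (Fin dA) (Fin dA) ℂ)) := by
  have hd : ((dA : ℂ)⁻¹ • (1 : Matrix (Fin dA) (Fin dA) ℂ))
      = Matrix.diagonal (fun _ => (dA : ℂ)⁻¹) := by
    ext i j
    by_cases h : i = j <;> simp [h, Matrix.one_apply, Matrix.diagonal]
  constructor
  · rw [hd]
    refine Matrix.PosSemidef.diagonal fun i => ?_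
    have : ((dA : ℂ))⁻¹ = (((dA : ℝ)⁻¹ : ℝ) : ℂ) := by push_cast; ring
    rw [this]
    exact Complex.zero_le_real.mpr (by positivity)
  · rw [Matrix.trace_smul, Matrix.trace_one]
    simp only [Fintype.card_fin, smul_eq_mul]
    rw [inv_mul_cancel₀]
    exact Nat.cast_ne_zero.mpr hA.ne'

/-- Helstrom-type test: a nonzero traceless Hermitian matrix admits a two-outcome
measurement element with strictly positive overlap. -/
lemma exists_helstrom_test {dB : ℕ} (Δ : Matrix (Fin dB) (Fin dB) ℂ) (hΔH : Δ.IsHermitian)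
    (hΔne : Δ ≠ 0) (hΔtr : Δ.trace = 0) :
    ∃ E : Matrix (Fin dB) (Fin dB) ℂ, E.PosSemidef ∧ (1 - E).PosSemidef ∧
      0 < ((E * Δ).trace).re := by
  set μ := hΔH.eigenvalues with hμ
  set V : Matrix (Fin dB) (Fin dB) ℂ :=
    (hΔH.eigenvectorUnitary : Matrix (Fin dB) (Fin dB) ℂ) with hV
  have hVmem := hΔH.eigenvectorUnitary.2
  have hVV : star V * V = 1 := hVmem.1
  have hVV' : V * star V = 1 := hVmem.2
  have hspec : Δ = V * Matrix.diagonal (Complex.ofReal ∘ μ) * star V := hΔH.spectral_theorem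
  set d : Fin dB → ℂ := fun i => if 0 < μ i then 1 else 0 with hd
  refine ⟨V * Matrix.diagonal d * star V, ?_, ?_, ?_⟩
  · have : star V = Vᴴ := rfl
    rw [this]
    refine Matrix.PosSemidef.mul_mul_conjTranspose_same ?_ V
    refine Matrix.PosSemidef.diagonal fun i => ?_
    by_cases h : 0 < μ i <;> simp [hd, h]
  · have h1 : (1 : Matrix (Fin dB) (Fin dB) ℂ) - V * Matrix.diagonal d * star V
        = V * Matrix.diagonal (fun i => 1 - d i) * star V := by
      have : Matrix.diagonal (fun i : Fin dB => 1 - d i) = 1 - Matrix.diagonal d := by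
        rw [← Matrix.diagonal_one, Matrix.diagonal_sub]
      rw [this, Matrix.mul_sub, Matrix.mul_one, Matrix.sub_mul, hVV']
    rw [h1]
    have : star V = Vᴴ := rfl
    rw [this]
    refine Matrix.PosSemidef.mul_mul_conjTranspose_same ?_ V
    refine Matrix.PosSemidef.diagonal fun i => ?_
    by_cases h : 0 < μ i <;> simp [hd, h]
  · have hmul : V * Matrix.diagonal d * star V * Δ
        = V * (Matrix.diagonal d * Matrix.diagonal (Complex.ofReal ∘ μ)) * star V := by
      rw [hspec]
      rw [show V * Matrix.diagonal (Complex.ofReal ∘ μ) * star V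
          = V * (Matrix.diagonal (Complex.ofReal ∘ μ) * star V) from mul_assoc _ _ _]
      rw [mul_assoc (V * Matrix.diagonal d) (star V) _, ← mul_assoc (star V) V _, hVV, one_mul,
        ← mul_assoc, mul_assoc V (Matrix.diagonal d) _]
    have htr : (V * Matrix.diagonal d * star V * Δ).trace
        = ∑ i, d i * (μ i : ℂ) := by
      rw [hmul, Matrix.trace_mul_comm, ← mul_assoc, ← mul_assoc, hVV, one_mul,
        Matrix.diagonal_mul_diagonal, Matrix.trace_diagonal]
      rfl
    have hex : ∃ i, 0 < μ i := by
      by_contra hno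
      push_neg at hno
      have hsum : ∑ i, μ i = 0 := by
        have : Δ.trace = ∑ i, (μ i : ℂ) := by
          rw [hspec, Matrix.trace_mul_comm, ← mul_assoc, hVV, one_mul, Matrix.trace_diagonal]
          rfl
        rw [hΔtr] at this
        exact_mod_cast this.symm
      have hall : ∀ i ∈ Finset.univ, μ i = 0 := by
        intro i _
        have := (Finset.sum_eq_zero_iff_of_nonneg (fun j _ => neg_nonneg.mpr (hno j))).mp
          (by rw [Finset.sum_neg_distrib, hsum, neg_zero]) i (Finset.mem_univ i)
        linarith
      apply hΔne
      rw [hspec]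
      have : Matrix.diagonal (Complex.ofReal ∘ μ) = 0 := by
        ext i j
        by_cases h : i = j <;>
          simp [Matrix.diagonal, h, hall _ (Finset.mem_univ _), Function.comp]
      rw [this, Matrix.mul_zero, Matrix.zero_mul]
    rw [htr]
    have : (∑ i, d i * (μ i : ℂ)).re = ∑ i, if 0 < μ i then μ i else 0 := by
      rw [Complex.re_sum]
      refine Finset.sum_congr rfl fun i _ => ?_
      by_cases h : 0 < μ i <;> simp [hd, h]
    rw [this]
    obtain ⟨i0, hi0⟩ := hex
    refine Finset.sum_pos' (fun i _ => ?_) ⟨i0, Finset.mem_univ i0, by simp [hi0]⟩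
    by_cases h : 0 < μ i <;> simp [h]
    linarith

end Aux

/-- `cv(N) = 1` iff `N` is a replacer channel, i.e. there is a fixed state `σ`
with `N(ρ) = σ` for all density operators `ρ`. -/
theorem cv_eq_one_iff_replacer {dA dB : ℕ} (hA : 0 < dA) (hB : 0 < dB)
    (N : Channel (Fin dA) (Fin dB)) :
    cvOp N = 1 ↔
      ∃ σ : Matrix (Fin dB) (Fin dB) ℂ, IsDensity σ ∧
        ∀ ρ : Matrix (Fin dA) (Fin dA) ℂ, IsDensity ρ → N.map ρ = σ := by
  have hρ0 : IsDensity ((dA : ℂ)⁻¹ • (1 : Matrix (Fin dA) (Fin dA) ℂ)) := maxMixed_isDensity hA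
  set ρ0 : Matrix (Fin dA) (Fin dA) ℂ := (dA : ℂ)⁻¹ • 1 with hρ0def
  constructor
  · intro h1
    by_contra hrep
    push_neg at hrep
    have hσ : IsDensity (N.map ρ0) :=
      ⟨channel_posSemidef N hρ0.1, by rw [N.tp]; exact hρ0.2⟩
    obtain ⟨ρ1, hρ1, hne⟩ := hrep (N.map ρ0) hσ
    set Δ := N.map ρ1 - N.map ρ0 with hΔdef
    have hΔH : Δ.IsHermitian :=
      ((channel_posSemidef N hρ1.1).1).sub ((channel_posSemidef N hρ0.1).1)
    have hΔne : Δ ≠ 0 := sub_ne_zero.mpr hne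
    have hΔtr : Δ.trace = 0 := by
      rw [hΔdef, Matrix.trace_sub, N.tp, N.tp, hρ1.2, hρ0.2, sub_self]
    obtain ⟨E, hE, hE', hEΔ⟩ := exists_helstrom_test Δ hΔH hΔne hΔtr
    set t := ((E * Δ).trace).re with htdef
    unfold cvOp at h1
    have hmem : (1 + t) ∈ {r | ∃ (n : ℕ) (ρ : Fin n → Matrix (Fin dA) (Fin dA) ℂ)
        (Ee : Fin n → Matrix (Fin dB) (Fin dB) ℂ),
        (∀ x, IsDensity (ρ x)) ∧ (∀ x, (Ee x).PosSemidef) ∧ (∑ x, Ee x) = 1 ∧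
          r = (∑ x, (Ee x * N.map (ρ x)).trace).re} := by
      refine ⟨2, ![ρ1, ρ0], ![E, 1 - E], ?_, ?_, ?_, ?_⟩
      · intro x
        fin_cases x <;>
          simp only [Matrix.cons_val_zero, Matrix.cons_val_one, Matrix.head_cons]
        exacts [hρ1, hρ0]
      · intro x
        fin_cases x <;>
          simp only [Matrix.cons_val_zero, Matrix.cons_val_one, Matrix.head_cons]
        exacts [hE, hE']
      · rw [Fin.sum_univ_two]
        simp only [Matrix.cons_val_zero, Matrix.cons_val_one, Matrix.head_cons]
        abel
      · rw [Fin.sum_univ_two]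
        simp only [Matrix.cons_val_zero, Matrix.cons_val_one, Matrix.head_cons]
        have hsplit : (E * N.map ρ1).trace + ((1 - E) * N.map ρ0).trace
            = (E * Δ).trace + (N.map ρ0).trace := by
          rw [hΔdef, Matrix.mul_sub, Matrix.trace_sub, Matrix.sub_mul, Matrix.trace_sub,
            Matrix.one_mul]
          ring
        rw [hsplit, hσ.2, Complex.add_re, Complex.one_re, htdef]
        ring
    by_cases hbdd : BddAbove {r | ∃ (n : ℕ) (ρ : Fin n → Matrix (Fin dA) (Fin dA) ℂ)
        (Ee : Fin n → Matrix (Fin dB) (Fin dB) ℂ),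
        (∀ x, IsDensity (ρ x)) ∧ (∀ x, (Ee x).PosSemidef) ∧ (∑ x, Ee x) = 1 ∧
          r = (∑ x, (Ee x * N.map (ρ x)).trace).re}
    · have := le_csSup hbdd hmem
      rw [h1] at this
      linarith
    · rw [Real.sSup_of_not_bddAbove hbdd] at h1
      norm_num at h1
  · rintro ⟨σ, hσ, hrep⟩
    have hset : {r | ∃ (n : ℕ) (ρ : Fin n → Matrix (Fin dA) (Fin dA) ℂ)
        (E : Fin n → Matrix (Fin dB) (Fin dB) ℂ),
        (∀ x, IsDensity (ρ x)) ∧ (∀ x, (E x).PosSemidef) ∧ (∑ x, E x) = 1 ∧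
          r = (∑ x, (E x * N.map (ρ x)).trace).re} = {(1 : ℝ)} := by
      ext r
      simp only [Set.mem_setOf_eq, Set.mem_singleton_iff]
      constructor
      · rintro ⟨n, ρ, E, hρ, hE, hsum, rfl⟩
        have h1 : ∀ x, N.map (ρ x) = σ := fun x => hrep _ (hρ x)
        have hcalc : ∑ x, (E x * N.map (ρ x)).trace = ((∑ x, E x) * σ).trace := by
          rw [Finset.sum_mul, Matrix.trace_sum]
          exact Finset.sum_congr rfl fun x _ => by rw [h1]
        rw [hcalc, hsum, Matrix.one_mul, hσ.2, Complex.one_re]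
      · rintro rfl
        refine ⟨1, fun _ => ρ0, fun _ => 1, fun _ => hρ0, fun _ => Matrix.PosSemidef.one,
          by simp, ?_⟩
        rw [Fin.sum_univ_one, Matrix.one_mul, N.tp, hρ0.2, Complex.one_re]
    unfold cvOp
    rw [hset]
    exact csSup_singleton 1
end

section
/- For a quantum channel N: CPTP(A→B) with Choi matrix J_N, the communication value equals the maximum of Tr[Ω J_N] over all separable positive operators Ω ∈ SEP(A:B) satisfying Tr_A[Ω] = I^B. -/
open scoped BigOperators Kronecker ComplexOrder
open Matrix

section CVAux

set_option linter.unusedSectionVars false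

lemma sum4_comm' {α β γ δ M : Type*} [Fintype α] [Fintype β] [Fintype γ] [Fintype δ]
    [AddCommMonoid M] (f : α → β → γ → δ → M) :
    ∑ a, ∑ b, ∑ c, ∑ d, f a b c d = ∑ b, ∑ d, ∑ a, ∑ c, f a b c d := calc
  ∑ a, ∑ b, ∑ c, ∑ d, f a b c d
      = ∑ b, ∑ a, ∑ c, ∑ d, f a b c d := Finset.sum_comm
  _ = ∑ b, ∑ a, ∑ d, ∑ c, f a b c d := Finset.sum_congr rfl fun _ _ =>
        Finset.sum_congr rfl fun _ _ => Finset.sum_comm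
  _ = ∑ b, ∑ d, ∑ a, ∑ c, f a b c d := Finset.sum_congr rfl fun _ _ => Finset.sum_comm

variable {n : Type*} [Fintype n]

lemma Matrix.posSemidef_iff_eq_transpose_mul_self {n : Type*} [Fintype n] {A : Matrix n n ℂ} :
    A.PosSemidef ↔ ∃ B : Matrix n n ℂ, A = Bᴴ * B := by
  classical
  open scoped MatrixOrder in
  exact ⟨fun h => by
    obtain ⟨B, rfl⟩ := CStarAlgebra.nonneg_iff_eq_star_mul_self.mp h.nonneg
    exact ⟨B, rfl⟩, fun ⟨B, h⟩ => h ▸ posSemidef_conjTranspose_mul_self B⟩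

lemma trace_ctm (B : Matrix n n ℂ) :
    (Bᴴ * B).trace = ((∑ i, ∑ j, Complex.normSq (B j i) : ℝ) : ℂ) := by
  simp only [Matrix.trace, Matrix.diag, Matrix.mul_apply, Matrix.conjTranspose_apply]
  push_cast
  refine Finset.sum_congr rfl fun i _ => Finset.sum_congr rfl fun j _ => ?_
  rw [Complex.normSq_eq_conj_mul_self]
  rfl

lemma psd_trace_re_coe {A : Matrix n n ℂ} (hA : A.PosSemidef) :
    (A.trace.re : ℂ) = A.trace := by
  obtain ⟨B, rfl⟩ := Matrix.posSemidef_iff_eq_transpose_mul_self.mp hA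
  rw [trace_ctm]; simp

lemma psd_trace_re_nonneg {A : Matrix n n ℂ} (hA : A.PosSemidef) :
    0 ≤ A.trace.re := by
  obtain ⟨B, rfl⟩ := Matrix.posSemidef_iff_eq_transpose_mul_self.mp hA
  rw [trace_ctm]
  simp only [Complex.ofReal_re]
  exact Finset.sum_nonneg fun i _ => Finset.sum_nonneg fun j _ => Complex.normSq_nonneg _

lemma psd_trace_zero {A : Matrix n n ℂ} (hA : A.PosSemidef) (h : A.trace = 0) :
    A = 0 := by
  obtain ⟨B, rfl⟩ := Matrix.posSemidef_iff_eq_transpose_mul_self.mp hA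
  rw [trace_ctm] at h
  norm_cast at h
  have hB : B = 0 := by
    ext j i
    have h1 := (Finset.sum_eq_zero_iff_of_nonneg (fun i _ => Finset.sum_nonneg
      (fun j _ => Complex.normSq_nonneg (B j i)))).mp h i (Finset.mem_univ i)
    have h2 := (Finset.sum_eq_zero_iff_of_nonneg
      (fun j _ => Complex.normSq_nonneg (B j i))).mp h1 j (Finset.mem_univ j)
    simpa using Complex.normSq_eq_zero.mp h2
  simp [hB]

lemma psd_smul_real {A : Matrix n n ℂ} (hA : A.PosSemidef) {c : ℝ} (hc : 0 ≤ c) :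
    ((c : ℂ) • A).PosSemidef := by
  obtain ⟨B, rfl⟩ := Matrix.posSemidef_iff_eq_transpose_mul_self.mp hA
  have key : (c : ℂ) • (Bᴴ * B) =
      ((Real.sqrt c : ℂ) • B)ᴴ * ((Real.sqrt c : ℂ) • B) := by
    rw [conjTranspose_smul, Matrix.smul_mul, Matrix.mul_smul, smul_smul]
    congr 1
    simp only [Complex.star_def, Complex.conj_ofReal]
    rw [← Complex.ofReal_mul, Real.mul_self_sqrt hc]
  rw [key]
  exact Matrix.posSemidef_conjTranspose_mul_self _

variable {ιA ιB : Type*} [Fintype ιA] [DecidableEq ιA] [Fintype ιB] [DecidableEq ιB]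

lemma transpose_eq_sum_std (a : Matrix ιA ιA ℂ) :
    aᵀ = ∑ i : ιA, ∑ j : ιA, a i j • single j i (1 : ℂ) := by
  ext i' j'
  simp [Matrix.sum_apply, single, Matrix.transpose_apply, mul_ite,
    Finset.sum_ite_eq, and_comm, ite_and]

lemma trace_kron_mul_choi (Φ : Matrix ιA ιA ℂ →ₗ[ℂ] Matrix ιB ιB ℂ)
    (a : Matrix ιA ιA ℂ) (b : Matrix ιB ιB ℂ) :
    ((a ⊗ₖ b) * choi Φ).trace = (b * Φ aᵀ).trace := by
  rw [transpose_eq_sum_std a]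
  simp only [map_sum, _root_.map_smul]
  simp only [Matrix.trace, Matrix.diag, Matrix.mul_apply, Fintype.sum_prod_type,
    kroneckerMap_apply, choi, Matrix.of_apply, Matrix.sum_apply, Matrix.smul_apply,
    smul_eq_mul, Finset.mul_sum, Finset.sum_mul]
  refine (sum4_comm' _).trans ?_
  refine Finset.sum_congr rfl fun k _ => Finset.sum_congr rfl fun l _ =>
    Finset.sum_congr rfl fun i _ => Finset.sum_congr rfl fun j _ => ?_
  ring

lemma ptraceA_kron (a : Matrix ιA ιA ℂ) (b : Matrix ιB ιB ℂ) :
    ptraceA (a ⊗ₖ b) = a.trace • b := by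
  ext k l
  simp [ptraceA, Matrix.trace, kroneckerMap_apply, Matrix.diag, Finset.sum_mul]

lemma ptraceA_sum {m : ℕ} (f : Fin m → Matrix (ιA × ιB) (ιA × ιB) ℂ) :
    ptraceA (∑ x, f x) = ∑ x, ptraceA (f x) := by
  ext k l
  simp [ptraceA, Matrix.sum_apply]
  exact Finset.sum_comm

lemma exists_density (ι : Type*) [Fintype ι] [DecidableEq ι] [Nonempty ι] :
    ∃ σ : Matrix ι ι ℂ, IsDensity σ := by
  refine ⟨(((Fintype.card ι : ℝ)⁻¹ : ℝ) : ℂ) • 1, ?_, ?_⟩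
  · exact psd_smul_real Matrix.PosSemidef.one (by positivity)
  · rw [Matrix.trace_smul, Matrix.trace_one]
    have hc : (Fintype.card ι : ℝ) ≠ 0 := by
      simp [Fintype.card_ne_zero]
    push_cast
    field_simp
    simp

end CVAux

/-- The communication value equals the maximum of `Tr[Ω J_N]` over separable
positive operators `Ω` with `Tr_A Ω = I`. -/
theorem cvOp_eq_conic {ιA ιB : Type*} [Fintype ιA] [DecidableEq ιA]
    [Fintype ιB] [DecidableEq ιB] [Nonempty ιA] [Nonempty ιB]
    (N : Channel ιA ιB) :
    cvOp N = sSup {r | ∃ Ω : Matrix (ιA × ιB) (ιA × ιB) ℂ,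
      IsSep Ω ∧ ptraceA Ω = 1 ∧ r = ((Ω * choi N.map).trace).re} := by
  unfold cvOp
  congr 1
  ext r
  simp only [Set.mem_setOf_eq]
  constructor
  · rintro ⟨n, ρ, E, hρ, hE, hsum, hr⟩
    refine ⟨∑ x, (ρ x)ᵀ ⊗ₖ E x,
      ⟨n, fun x => (ρ x)ᵀ, E, fun x => (hρ x).1.transpose, hE, rfl⟩, ?_, ?_⟩
    · rw [ptraceA_sum]
      simp only [ptraceA_kron, Matrix.trace_transpose]
      rw [← hsum]
      exact Finset.sum_congr rfl fun x _ => by rw [(hρ x).2, one_smul]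
    · rw [hr]
      congr 1
      rw [Finset.sum_mul, Matrix.trace_sum]
      refine Finset.sum_congr rfl fun x _ => ?_
      rw [trace_kron_mul_choi, Matrix.transpose_transpose]
  · rintro ⟨Ω, ⟨n, a, b, ha, hb, rfl⟩, hpt, hr⟩
    obtain ⟨σ, hσ⟩ := exists_density ιA
    refine ⟨n,
      fun x => if hx : ((a x).trace).re = 0 then σ
        else (((((a x).trace).re)⁻¹ : ℝ) : ℂ) • (a x)ᵀ,
      fun x => ((((a x).trace).re : ℝ) : ℂ) • b x, ?_, ?_, ?_, ?_⟩
    · intro x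
      by_cases hx : ((a x).trace).re = 0
      · simpa [hx] using hσ
      · simp only [hx, dif_neg, not_false_iff]
        constructor
        · exact psd_smul_real (ha x).transpose
            (inv_nonneg.mpr (psd_trace_re_nonneg (ha x)))
        · rw [Matrix.trace_smul, Matrix.trace_transpose, smul_eq_mul,
            ← psd_trace_re_coe (ha x)]
          simp only [Complex.ofReal_re, Complex.ofReal_inv]
          exact inv_mul_cancel₀ (Complex.ofReal_ne_zero.mpr hx)
    · intro x
      exact psd_smul_real (hb x) (psd_trace_re_nonneg (ha x))
    · rw [← hpt, ptraceA_sum]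
      refine Finset.sum_congr rfl fun x _ => ?_
      have h := psd_trace_re_coe (ha x)
      simp only [ptraceA_kron, h]
    · rw [hr]
      congr 1
      rw [Finset.sum_mul, Matrix.trace_sum]
      refine (Finset.sum_congr rfl fun x _ => ?_).symm
      rw [trace_kron_mul_choi]
      by_cases hx : ((a x).trace).re = 0
      · have haz : a x = 0 := by
          apply psd_trace_zero (ha x)
          rw [← psd_trace_re_coe (ha x)]
          simp [hx]
        simp [hx, haz]
      · simp only [hx, dif_neg, not_false_iff]
        rw [_root_.map_smul, Matrix.mul_smul, Matrix.smul_mul, Matrix.trace_smul,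
          Matrix.trace_smul, smul_smul, smul_eq_mul,
          ← Complex.ofReal_mul, inv_mul_cancel₀ hx, Complex.ofReal_one, one_mul]
end

section
/- For any channel N: CPTP(A→B), Λ²(J_N) ≤ cv(N) ≤ d_B · Λ²(J_N), where Λ²(ω) = max over product unit vectors |α⟩|β⟩ of ⟨α,β|ω|α,β⟩. -/
open scoped BigOperators Kronecker ComplexOrder
open Matrix

set_option linter.unusedSectionVars false
set_option maxHeartbeats 1000000

noncomputable section LamAux
namespace LamAux
variable {ι κ : Type*} [Fintype ι] [Fintype κ]

def outer (w : ι → ℂ) : Matrix ι ι ℂ := Matrix.of fun p q => w p * star (w q)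

lemma quad_outer (w x : ι → ℂ) :
    star x ⬝ᵥ (outer w) *ᵥ x
      = star (∑ p, star (w p) * x p) * (∑ p, star (w p) * x p) := by
  simp only [dotProduct, mulVec, outer, Matrix.of_apply, star_sum, star_mul', star_star,
    Finset.sum_mul, Finset.mul_sum, Pi.star_apply]
  rw [Finset.sum_comm]
  apply Finset.sum_congr rfl; intro q _
  apply Finset.sum_congr rfl; intro p _
  ring

lemma outer_posSemidef (w : ι → ℂ) : (outer w).PosSemidef := by
  refine Matrix.PosSemidef.of_dotProduct_mulVec_nonneg ?_ ?_
  · ext p q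
    simp [outer, Matrix.conjTranspose_apply, mul_comm]
  · intro x
    rw [quad_outer]
    exact star_mul_self_nonneg _

lemma trace_outer (w : ι → ℂ) : (outer w).trace = ((∑ p, ‖w p‖ ^ 2 : ℝ) : ℂ) := by
  simp only [Matrix.trace, Matrix.diag, outer, Matrix.of_apply]
  push_cast
  apply Finset.sum_congr rfl; intro p _
  exact RCLike.mul_conj (w p)

lemma trace_outer_mul (w : ι → ℂ) (J : Matrix ι ι ℂ) :
    ((outer w) * J).trace = star w ⬝ᵥ J *ᵥ w := by
  simp only [Matrix.trace, Matrix.diag, Matrix.mul_apply, outer, Matrix.of_apply,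
    dotProduct, mulVec, Pi.star_apply, Finset.mul_sum]
  rw [Finset.sum_comm]
  apply Finset.sum_congr rfl; intro q _
  apply Finset.sum_congr rfl; intro p _
  ring

lemma outer_kron (u : ι → ℂ) (v : κ → ℂ) :
    (outer u) ⊗ₖ (outer v) = outer (fun p : ι × κ => u p.1 * v p.2) := by
  ext p q
  simp only [Matrix.kroneckerMap_apply, outer, Matrix.of_apply, star_mul']
  ring

lemma sum_kron {n : Type*} (s : Finset n) (f : n → Matrix ι ι ℂ) (b : Matrix κ κ ℂ) :
    (∑ j ∈ s, f j) ⊗ₖ b = ∑ j ∈ s, (f j) ⊗ₖ b := by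
  ext p q
  simp [Matrix.kroneckerMap_apply, Matrix.sum_apply, Finset.sum_mul]

lemma kron_sum {n : Type*} (s : Finset n) (a : Matrix ι ι ℂ) (f : n → Matrix κ κ ℂ) :
    a ⊗ₖ (∑ j ∈ s, f j) = ∑ j ∈ s, a ⊗ₖ (f j) := by
  ext p q
  simp [Matrix.kroneckerMap_apply, Matrix.sum_apply, Finset.mul_sum]

lemma smul_kron' (c : ℂ) (a : Matrix ι ι ℂ) (b : Matrix κ κ ℂ) :
    (c • a) ⊗ₖ b = c • (a ⊗ₖ b) := by
  ext p q
  simp [Matrix.kroneckerMap_apply, mul_assoc]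

lemma kron_smul' (c : ℂ) (a : Matrix ι ι ℂ) (b : Matrix κ κ ℂ) :
    a ⊗ₖ (c • b) = c • (a ⊗ₖ b) := by
  ext p q
  simp [Matrix.kroneckerMap_apply]
  ring

/-- Rank-one decomposition of a PSD matrix with unit eigenvectors. -/
lemma psd_decomp [DecidableEq ι] {A : Matrix ι ι ℂ} (hA : A.PosSemidef) :
    ∃ (c : ι → ℝ) (u : ι → ι → ℂ),
      (∀ j, 0 ≤ c j) ∧ (∀ j, (∑ p, ‖u j p‖ ^ 2) = 1) ∧
        A = ∑ j, (c j : ℂ) • outer (u j) := by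
  classical
  refine ⟨hA.1.eigenvalues, fun j p => (hA.1.eigenvectorUnitary : Matrix ι ι ℂ) p j,
    fun j => hA.eigenvalues_nonneg j, ?_, ?_⟩
  · intro j
    have h := congrFun (congrFun ((Matrix.mem_unitaryGroup_iff'.mp
      hA.1.eigenvectorUnitary.2)) j) j
    have h2 : (∑ p, star ((hA.1.eigenvectorUnitary : Matrix ι ι ℂ) p j) *
        (hA.1.eigenvectorUnitary : Matrix ι ι ℂ) p j) = 1 := by
      simpa [Matrix.mul_apply, Matrix.conjTranspose_apply, Matrix.one_apply] using h
    have h3 : ((∑ p, ‖(hA.1.eigenvectorUnitary : Matrix ι ι ℂ) p j‖ ^ 2 : ℝ) : ℂ) = 1 := by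
      push_cast
      rw [← h2]
      apply Finset.sum_congr rfl; intro p _
      rw [mul_comm]
      exact (RCLike.mul_conj _).symm
    exact_mod_cast h3
  · have hspec := hA.1.spectral_theorem
    ext p q
    conv_lhs => rw [hspec, Unitary.conjStarAlgAut_apply]
    simp only [Matrix.mul_apply, Matrix.sum_apply, Matrix.smul_apply, outer, Matrix.of_apply,
      Matrix.diagonal_apply, Function.comp_apply, smul_eq_mul, Matrix.star_apply,
      mul_ite, ite_mul, mul_zero, zero_mul, Finset.sum_ite_eq, Finset.sum_ite_eq',
      Finset.mem_univ, if_true]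
    apply Finset.sum_congr rfl; intro j _
    rw [mul_right_comm, mul_comm]
    norm_cast

/-- The trace of a PSD matrix is a nonnegative real. -/
lemma psd_trace_real {A : Matrix ι ι ℂ} (hA : A.PosSemidef) :
    A.trace = ((A.trace.re : ℝ) : ℂ) ∧ 0 ≤ A.trace.re := by
  classical
  have hd : ∀ p, 0 ≤ A p p := by
    intro p
    simpa [dotProduct, mulVec, Pi.single_apply] using hA.dotProduct_mulVec_nonneg (Pi.single p 1)
  have ht : 0 ≤ A.trace := Finset.sum_nonneg fun p _ => hd p
  obtain ⟨h1, h2⟩ := Complex.nonneg_iff.mp ht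
  exact ⟨Complex.ext (by simp) (by simp [← h2]), h1⟩

/-- Expansion of `Tr[(a ⊗ b) J]` for PSD `a`, `b`. -/
lemma trace_kron_psd [DecidableEq ι] [DecidableEq κ]
    {a : Matrix ι ι ℂ} {b : Matrix κ κ ℂ} (J : Matrix (ι × κ) (ι × κ) ℂ)
    (ha : a.PosSemidef) (hb : b.PosSemidef) :
    ∃ (c : ι → ℝ) (d : κ → ℝ) (u : ι → ι → ℂ) (v : κ → κ → ℂ),
      (∀ j, 0 ≤ c j) ∧ (∀ k, 0 ≤ d k) ∧
      (∀ j, (∑ p, ‖u j p‖ ^ 2) = 1) ∧ (∀ k, (∑ p, ‖v k p‖ ^ 2) = 1) ∧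
      a.trace = ((∑ j, c j : ℝ) : ℂ) ∧ b.trace = ((∑ k, d k : ℝ) : ℂ) ∧
      ((a ⊗ₖ b) * J).trace = ∑ j, ∑ k, ((c j * d k : ℝ) : ℂ) *
        (star (fun p : ι × κ => u j p.1 * v k p.2) ⬝ᵥ
          J *ᵥ fun p : ι × κ => u j p.1 * v k p.2) := by
  obtain ⟨c, u, hc, hu, hadec⟩ := psd_decomp ha
  obtain ⟨d, v, hd, hv, hbdec⟩ := psd_decomp hb
  refine ⟨c, d, u, v, hc, hd, hu, hv, ?_, ?_, ?_⟩
  · rw [hadec, Matrix.trace_sum]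
    push_cast
    apply Finset.sum_congr rfl; intro j _
    rw [Matrix.trace_smul, trace_outer, hu j]
    simp
  · rw [hbdec, Matrix.trace_sum]
    push_cast
    apply Finset.sum_congr rfl; intro k _
    rw [Matrix.trace_smul, trace_outer, hv k]
    simp
  · rw [hadec, hbdec, sum_kron]
    rw [Finset.sum_mul, Matrix.trace_sum]
    apply Finset.sum_congr rfl; intro j _
    rw [kron_sum, Finset.sum_mul, Matrix.trace_sum]
    apply Finset.sum_congr rfl; intro k _
    rw [smul_kron', kron_smul', smul_smul, Matrix.smul_mul, Matrix.trace_smul,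
      outer_kron, trace_outer_mul]
    push_cast
    simp [smul_eq_mul]

lemma norm_le_one_of_sum_sq {a : ι → ℂ} (h : (∑ i, ‖a i‖ ^ 2) = 1) (i : ι) : ‖a i‖ ≤ 1 := by
  have h1 : ‖a i‖ ^ 2 ≤ 1 := by
    rw [← h]
    exact Finset.single_le_sum (f := fun i => ‖a i‖ ^ 2) (fun _ _ => sq_nonneg _)
      (Finset.mem_univ i)
  nlinarith [norm_nonneg (a i)]

lemma posSemidef_real_smul {A : Matrix ι ι ℂ} (hA : A.PosSemidef) {c : ℝ} (hc : 0 ≤ c) :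
    ((c : ℂ) • A).PosSemidef := by
  refine Matrix.PosSemidef.of_dotProduct_mulVec_nonneg ?_ ?_
  · have h : ((c : ℂ) • A)ᴴ = (c : ℂ) • A := by
      rw [Matrix.conjTranspose_smul, hA.1, Complex.star_def, Complex.conj_ofReal]
    exact h
  · intro x
    rw [Matrix.smul_mulVec, dotProduct_smul, smul_eq_mul]
    exact mul_nonneg (Complex.zero_le_real.mpr hc) (hA.dotProduct_mulVec_nonneg x)

lemma one_sub_outer_posSemidef [DecidableEq ι] {b : ι → ℂ} (hb : (∑ i, ‖b i‖ ^ 2) = 1) :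
    ((1 : Matrix ι ι ℂ) - outer b).PosSemidef := by
  classical
  refine Matrix.PosSemidef.of_dotProduct_mulVec_nonneg ?_ ?_
  · exact (Matrix.isHermitian_one).sub (outer_posSemidef b).1
  · intro x
    rw [Matrix.sub_mulVec, dotProduct_sub, quad_outer]
    set t := ∑ p, star (b p) * x p with ht
    have h1 : star x ⬝ᵥ (1 : Matrix ι ι ℂ) *ᵥ x = ((∑ i, ‖x i‖ ^ 2 : ℝ) : ℂ) := by
      rw [Matrix.one_mulVec]
      push_cast
      apply Finset.sum_congr rfl; intro p _
      rw [Pi.star_apply, mul_comm]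
      exact RCLike.mul_conj (x p)
    have h2 : star t * t = ((‖t‖ ^ 2 : ℝ) : ℂ) := by
      push_cast
      exact RCLike.conj_mul t
    rw [h1, h2, ← Complex.ofReal_sub]
    rw [Complex.zero_le_real]
    have hcs : ‖t‖ ^ 2 ≤ ∑ i, ‖x i‖ ^ 2 := by
      have h3 : ‖t‖ ≤ ∑ p, ‖b p‖ * ‖x p‖ := by
        refine le_trans (norm_sum_le _ _) ?_
        apply Finset.sum_le_sum; intro p _
        rw [norm_mul, norm_star]
      have h4 : (∑ p, ‖b p‖ * ‖x p‖) ^ 2 ≤ (∑ p, ‖b p‖ ^ 2) * ∑ p, ‖x p‖ ^ 2 :=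
        Finset.sum_mul_sq_le_sq_mul_sq _ _ _
      rw [hb, one_mul] at h4
      calc ‖t‖ ^ 2 ≤ (∑ p, ‖b p‖ * ‖x p‖) ^ 2 := by
            apply pow_le_pow_left₀ (norm_nonneg _) h3
        _ ≤ _ := h4
    linarith

lemma trace_prod (Ω : Matrix (ι × κ) (ι × κ) ℂ) :
    Ω.trace = ∑ k, (Matrix.of (fun k l => ∑ i, Ω (i, k) (i, l)) : Matrix κ κ ℂ) k k := by
  rw [Matrix.trace]
  rw [show (Finset.univ : Finset (ι × κ)) = Finset.univ ×ˢ Finset.univ from rfl]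
  rw [Finset.sum_product]
  rw [Finset.sum_comm]
  rfl

end LamAux
end LamAux
noncomputable section MainAux
namespace LamAux
variable {ιA ιB : Type*} [Fintype ιA] [DecidableEq ιA] [Fintype ιB] [DecidableEq ιB]

def lamSet (ω : Matrix (ιA × ιB) (ιA × ιB) ℂ) : Set ℝ :=
  {r | ∃ (a : ιA → ℂ) (b : ιB → ℂ),
    (∑ i, ‖a i‖ ^ 2) = 1 ∧ (∑ k, ‖b k‖ ^ 2) = 1 ∧
      r = (star (fun p : ιA × ιB => a p.1 * b p.2) ⬝ᵥ
        ω *ᵥ fun p : ιA × ιB => a p.1 * b p.2).re}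

lemma lam2_eq (ω : Matrix (ιA × ιB) (ιA × ιB) ℂ) : lam2 ω = sSup (lamSet ω) := rfl

lemma bddAbove_lamSet (ω : Matrix (ιA × ιB) (ιA × ιB) ℂ) : BddAbove (lamSet ω) := by
  refine ⟨∑ q : ιA × ιB, ∑ p : ιA × ιB, ‖ω q p‖, ?_⟩
  rintro r ⟨a, b, ha, hb, rfl⟩
  set w : ιA × ιB → ℂ := fun p => a p.1 * b p.2 with hw
  have hwle : ∀ q, ‖w q‖ ≤ 1 := by
    intro q
    rw [hw]
    calc ‖a q.1 * b q.2‖ = ‖a q.1‖ * ‖b q.2‖ := norm_mul _ _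
      _ ≤ 1 * 1 := mul_le_mul (norm_le_one_of_sum_sq ha q.1)
          (norm_le_one_of_sum_sq hb q.2) (norm_nonneg _) zero_le_one
      _ = 1 := one_mul 1
  calc (star w ⬝ᵥ ω *ᵥ w).re ≤ ‖star w ⬝ᵥ ω *ᵥ w‖ := Complex.re_le_norm _
    _ ≤ ∑ q, ‖star (w q) * (ω *ᵥ w) q‖ := norm_sum_le _ _
    _ ≤ ∑ q, ∑ p, ‖ω q p‖ := by
        apply Finset.sum_le_sum; intro q _
        rw [norm_mul, norm_star]
        calc ‖w q‖ * ‖(ω *ᵥ w) q‖ ≤ 1 * ‖(ω *ᵥ w) q‖ :=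
              mul_le_mul_of_nonneg_right (hwle q) (norm_nonneg _)
          _ = ‖∑ p, ω q p * w p‖ := by rw [one_mul]; rfl
          _ ≤ ∑ p, ‖ω q p * w p‖ := norm_sum_le _ _
          _ ≤ ∑ p, ‖ω q p‖ := by
              apply Finset.sum_le_sum; intro p _
              rw [norm_mul]
              calc ‖ω q p‖ * ‖w p‖ ≤ ‖ω q p‖ * 1 :=
                    mul_le_mul_of_nonneg_left (hwle p) (norm_nonneg _)
                _ = ‖ω q p‖ := mul_one _

lemma quad_le_lam2 (ω : Matrix (ιA × ιB) (ιA × ιB) ℂ) {a : ιA → ℂ} {b : ιB → ℂ}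
    (ha : (∑ i, ‖a i‖ ^ 2) = 1) (hb : (∑ k, ‖b k‖ ^ 2) = 1) :
    (star (fun p : ιA × ιB => a p.1 * b p.2) ⬝ᵥ
        ω *ᵥ fun p : ιA × ιB => a p.1 * b p.2).re ≤ lam2 ω :=
  le_csSup (bddAbove_lamSet ω) ⟨a, b, ha, hb, rfl⟩

lemma trace_kron_re_le (ω : Matrix (ιA × ιB) (ιA × ιB) ℂ)
    {a : Matrix ιA ιA ℂ} {b : Matrix ιB ιB ℂ} (ha : a.PosSemidef) (hb : b.PosSemidef) :
    ((a ⊗ₖ b) * ω).trace.re ≤ a.trace.re * b.trace.re * lam2 ω := by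
  obtain ⟨c, d, u, v, hc, hd, hu, hv, hta, htb, htr⟩ := trace_kron_psd ω ha hb
  rw [htr, hta, htb]
  simp only [Complex.re_sum, Complex.re_ofReal_mul, Complex.ofReal_re]
  calc ∑ j, ∑ k, (c j * d k) * (star (fun p : ιA × ιB => u j p.1 * v k p.2) ⬝ᵥ
          ω *ᵥ fun p : ιA × ιB => u j p.1 * v k p.2).re
      ≤ ∑ j, ∑ k, (c j * d k) * lam2 ω := by
        apply Finset.sum_le_sum; intro j _
        apply Finset.sum_le_sum; intro k _
        exact mul_le_mul_of_nonneg_left (quad_le_lam2 ω (hu j) (hv k))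
          (mul_nonneg (hc j) (hd k))
    _ = (∑ j, c j) * (∑ k, d k) * lam2 ω := by
        simp only [mul_assoc, ← Finset.mul_sum, ← Finset.sum_mul]

lemma trace_kron_re_nonneg {ω : Matrix (ιA × ιB) (ιA × ιB) ℂ} (hω : ω.PosSemidef)
    {a : Matrix ιA ιA ℂ} {b : Matrix ιB ιB ℂ} (ha : a.PosSemidef) (hb : b.PosSemidef) :
    0 ≤ ((a ⊗ₖ b) * ω).trace.re := by
  obtain ⟨c, d, u, v, hc, hd, hu, hv, hta, htb, htr⟩ := trace_kron_psd ω ha hb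
  rw [htr]
  simp only [Complex.re_sum, Complex.re_ofReal_mul]
  apply Finset.sum_nonneg; intro j _
  apply Finset.sum_nonneg; intro k _
  exact mul_nonneg (mul_nonneg (hc j) (hd k))
    (Complex.nonneg_iff.mp (hω.dotProduct_mulVec_nonneg _)).1

def cvSet (N : Channel ιA ιB) : Set ℝ :=
  {r | ∃ Ω : Matrix (ιA × ιB) (ιA × ιB) ℂ,
    IsSep Ω ∧ ptraceA Ω = 1 ∧ r = ((Ω * choi N.map).trace).re}

lemma cv_eq (N : Channel ιA ιB) : cv N = sSup (cvSet N) := rfl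

lemma trace_eq_card_of_ptraceA {Ω : Matrix (ιA × ιB) (ιA × ιB) ℂ}
    (hpt : ptraceA Ω = 1) : Ω.trace = (Fintype.card ιB : ℂ) := by
  have h := trace_prod Ω
  have h2 : (Matrix.of (fun k l => ∑ i, Ω (i, k) (i, l)) : Matrix ιB ιB ℂ) = 1 := hpt
  rw [h, h2]
  simp [Matrix.one_apply, Finset.card_univ]

lemma cvSet_le {N : Channel ιA ιB} {r : ℝ} (hr : r ∈ cvSet N) :
    r ≤ (Fintype.card ιB : ℝ) * lam2 (choi N.map) := by
  obtain ⟨Ω, ⟨n, A, B, hA, hB, hdec⟩, hpt, rfl⟩ := hr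
  set J := choi N.map with hJ
  have hre : ((Ω * J).trace).re = ∑ i, ((A i ⊗ₖ B i) * J).trace.re := by
    rw [hdec, Finset.sum_mul, Matrix.trace_sum, Complex.re_sum]
  have hsum : (∑ i, (A i).trace.re * (B i).trace.re) = (Fintype.card ιB : ℝ) := by
    have h1 : Ω.trace = ∑ i, ((A i).trace * (B i).trace) := by
      rw [hdec, Matrix.trace_sum]
      exact Finset.sum_congr rfl fun i _ => Matrix.trace_kronecker _ _
    have h2 := trace_eq_card_of_ptraceA hpt
    have h3 : ((∑ i, (A i).trace.re * (B i).trace.re : ℝ) : ℂ) = ((Fintype.card ιB : ℝ) : ℂ) := by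
      push_cast
      rw [← h2, h1]
      apply Finset.sum_congr rfl; intro i _
      conv_rhs => rw [(psd_trace_real (hA i)).1, (psd_trace_real (hB i)).1]
    exact_mod_cast h3
  rw [hre]
  calc ∑ i, ((A i ⊗ₖ B i) * J).trace.re
      ≤ ∑ i, (A i).trace.re * (B i).trace.re * lam2 J := by
        apply Finset.sum_le_sum; intro i _
        exact trace_kron_re_le J (hA i) (hB i)
    _ = (∑ i, (A i).trace.re * (B i).trace.re) * lam2 J := by
        rw [Finset.sum_mul]
    _ = (Fintype.card ιB : ℝ) * lam2 J := by rw [hsum]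

lemma bddAbove_cvSet (N : Channel ιA ιB) : BddAbove (cvSet N) :=
  ⟨(Fintype.card ιB : ℝ) * lam2 (choi N.map), fun _ hr => cvSet_le hr⟩

lemma cvSet_nonempty [Nonempty ιA] (N : Channel ιA ιB) : (cvSet N).Nonempty := by
  refine ⟨_, ((((Fintype.card ιA : ℝ)⁻¹ : ℝ) : ℂ) • (1 : Matrix ιA ιA ℂ)) ⊗ₖ (1 : Matrix ιB ιB ℂ),
    ⟨1, ![(((Fintype.card ιA : ℝ)⁻¹ : ℝ) : ℂ) • (1 : Matrix ιA ιA ℂ)], ![(1 : Matrix ιB ιB ℂ)],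
      ?_, ?_, ?_⟩, ?_, rfl⟩
  · intro i
    simpa using posSemidef_real_smul Matrix.PosSemidef.one (inv_nonneg.mpr (Nat.cast_nonneg _))
  · intro i
    simpa using (Matrix.PosSemidef.one : (1 : Matrix ιB ιB ℂ).PosSemidef)
  · simp [Fin.sum_univ_one]
  · ext k l
    simp only [ptraceA, Matrix.of_apply, Matrix.kroneckerMap_apply, Matrix.smul_apply,
      Matrix.one_apply_eq, smul_eq_mul, mul_one]
    show (∑ _x : ιA, (((Fintype.card ιA : ℝ)⁻¹ : ℝ) : ℂ) * (1 : Matrix ιB ιB ℂ) k l) = _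
    rw [Finset.sum_const, Finset.card_univ, nsmul_eq_mul, ← mul_assoc]
    rw [show ((Fintype.card ιA : ℕ) : ℂ) * (((Fintype.card ιA : ℝ)⁻¹ : ℝ) : ℂ) = 1 by
      push_cast
      exact mul_inv_cancel₀ (by exact_mod_cast Fintype.card_ne_zero)]
    rw [one_mul]

lemma exists_unit (ι : Type*) [Fintype ι] [DecidableEq ι] [Nonempty ι] :
    ∃ a : ι → ℂ, (∑ i, ‖a i‖ ^ 2) = 1 := by
  obtain ⟨i0⟩ := (inferInstance : Nonempty ι)
  refine ⟨fun i => if i = i0 then 1 else 0, ?_⟩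
  simp [apply_ite, Finset.sum_ite_eq']

lemma ptraceA_add (X Y : Matrix (ιA × ιB) (ιA × ιB) ℂ) :
    ptraceA (X + Y) = ptraceA X + ptraceA Y := by
  ext k l
  simp [ptraceA, Finset.sum_add_distrib]

lemma ptraceA_kron (m : Matrix ιA ιA ℂ) (n : Matrix ιB ιB ℂ) :
    ptraceA (m ⊗ₖ n) = m.trace • n := by
  ext k l
  simp [ptraceA, Matrix.kroneckerMap_apply, Matrix.trace, Matrix.diag, smul_eq_mul,
    Finset.sum_mul]

lemma lamSet_le_cv [Nonempty ιA] (N : Channel ιA ιB) {r : ℝ}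
    (hr : r ∈ lamSet (choi N.map)) : r ≤ cv N := by
  obtain ⟨a, b, ha, hb, rfl⟩ := hr
  set J := choi N.map with hJdef
  set σ : Matrix ιA ιA ℂ := (((Fintype.card ιA : ℝ)⁻¹ : ℝ) : ℂ) • (1 : Matrix ιA ιA ℂ) with hσ
  set Ω : Matrix (ιA × ιB) (ιA × ιB) ℂ :=
    (outer a) ⊗ₖ (outer b) + σ ⊗ₖ ((1 : Matrix ιB ιB ℂ) - outer b) with hΩ
  have hσpsd : σ.PosSemidef :=
    posSemidef_real_smul Matrix.PosSemidef.one (inv_nonneg.mpr (Nat.cast_nonneg _))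
  have hsub : ((1 : Matrix ιB ιB ℂ) - outer b).PosSemidef := one_sub_outer_posSemidef hb
  have hsep : IsSep Ω := by
    refine ⟨2, ![outer a, σ], ![outer b, 1 - outer b], ?_, ?_, ?_⟩
    · intro i
      fin_cases i
      · exact outer_posSemidef a
      · exact hσpsd
    · intro i
      fin_cases i
      · exact outer_posSemidef b
      · exact hsub
    · rw [Fin.sum_univ_two]
      simp [hΩ]
  have hpt : ptraceA Ω = 1 := by
    rw [hΩ, ptraceA_add, ptraceA_kron, ptraceA_kron, trace_outer, ha]
    have hσtr : σ.trace = 1 := by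
      rw [hσ, Matrix.trace_smul, Matrix.trace_one, smul_eq_mul]
      push_cast
      exact inv_mul_cancel₀ (by exact_mod_cast Fintype.card_ne_zero)
    rw [hσtr]
    push_cast
    rw [one_smul, one_smul, add_comm, sub_add_cancel]
  have hfirst : (((outer a) ⊗ₖ (outer b)) * J).trace
      = star (fun p : ιA × ιB => a p.1 * b p.2) ⬝ᵥ J *ᵥ fun p : ιA × ιB => a p.1 * b p.2 := by
    rw [outer_kron, trace_outer_mul]
  have hmem : ((Ω * J).trace).re ∈ cvSet N := ⟨Ω, hsep, hpt, rfl⟩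
  have hle : (star (fun p : ιA × ιB => a p.1 * b p.2) ⬝ᵥ
      J *ᵥ fun p : ιA × ιB => a p.1 * b p.2).re ≤ ((Ω * J).trace).re := by
    rw [hΩ, Matrix.add_mul, Matrix.trace_add, Complex.add_re, ← hfirst]
    have h2 := trace_kron_re_nonneg N.cp hσpsd hsub
    linarith
  exact le_trans hle (le_csSup (bddAbove_cvSet N) hmem)

end LamAux
end MainAux

/-- `Λ²(J_N) ≤ cv(N) ≤ d_B · Λ²(J_N)`. -/
theorem lam2_le_cv_le {ιA ιB : Type*} [Fintype ιA] [DecidableEq ιA]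
    [Fintype ιB] [DecidableEq ιB] [Nonempty ιA] [Nonempty ιB]
    (N : Channel ιA ιB) :
    lam2 (choi N.map) ≤ cv N ∧ cv N ≤ (Fintype.card ιB : ℝ) * lam2 (choi N.map) := by
  constructor
  · rw [LamAux.lam2_eq]
    apply csSup_le
    · obtain ⟨a, ha⟩ := LamAux.exists_unit ιA
      obtain ⟨b, hb⟩ := LamAux.exists_unit ιB
      exact ⟨_, a, b, ha, hb, rfl⟩
    · intro r hr
      exact LamAux.lamSet_le_cv N hr
  · rw [LamAux.cv_eq]
    exact csSup_le (LamAux.cvSet_nonempty N) fun r hr => LamAux.cvSet_le hr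
end

section
/- For any channel N: CPTP(A→B), the maximum output purity ν_∞(N) = sup_{ρ ∈ D(A)} ||N(ρ)||_∞ equals Λ²(J_N), the maximal overlap of the Choi matrix with product unit vectors. -/
open scoped BigOperators Kronecker ComplexOrder
open Matrix

open scoped Matrix.Norms.L2Operator

/-- The maximum output purity of a channel:
`ν_∞(N) = sup_{ρ density} ‖N(ρ)‖_∞` (L2 operator norm). -/
noncomputable def nuInf {ιA ιB : Type*} [Fintype ιA] [DecidableEq ιA]
    [Fintype ιB] [DecidableEq ιB] (N : Channel ιA ιB) : ℝ :=
  sSup {r | ∃ ρ : Matrix ιA ιA ℂ, IsDensity ρ ∧ r = ‖N.map ρ‖}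

/-! ### Auxiliary lemmas -/

section Aux

noncomputable section
set_option linter.unusedSectionVars false
set_option maxHeartbeats 1000000

namespace NuAux

variable {ιA ιB : Type*} [Fintype ιA] [DecidableEq ιA] [Fintype ιB] [DecidableEq ιB]

lemma sum4 (f : ιA → ιB → ιA → ιB → ℂ) :
    ∑ i, ∑ k, ∑ j, ∑ l, f i k j l = ∑ k, ∑ l, ∑ i, ∑ j, f i k j l := by
  rw [Finset.sum_comm]
  refine Finset.sum_congr rfl fun k _ => ?_
  have h1 : ∀ i : ιA, ∑ j, ∑ l, f i k j l = ∑ l, ∑ j, f i k j l :=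
    fun i => Finset.sum_comm
  simp_rw [h1]
  exact Finset.sum_comm

lemma map_entry (Φ : Matrix ιA ιA ℂ →ₗ[ℂ] Matrix ιB ιB ℂ) (X : Matrix ιA ιA ℂ) (k l : ιB) :
    Φ X k l = ∑ i, ∑ j, X i j * choi Φ ((i,k) : ιA × ιB) ((j,l) : ιA × ιB) := by
  conv_lhs => rw [matrix_eq_sum_single X]
  rw [map_sum]
  simp only [Matrix.sum_apply]
  refine Finset.sum_congr rfl fun i _ => ?_
  rw [map_sum]
  simp only [Matrix.sum_apply]
  refine Finset.sum_congr rfl fun j _ => ?_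
  have h : Matrix.single i j (X i j) = X i j • Matrix.single i j (1:ℂ) := by
    rw [smul_single, smul_eq_mul, mul_one]
  rw [h, LinearMap.map_smul]
  simp [choi]

lemma key_identity (Φ : Matrix ιA ιA ℂ →ₗ[ℂ] Matrix ιB ιB ℂ) (a : ιA → ℂ) (b : ιB → ℂ) :
    star (fun p : ιA × ιB => a p.1 * b p.2) ⬝ᵥ choi Φ *ᵥ (fun p : ιA × ιB => a p.1 * b p.2)
      = star b ⬝ᵥ (Φ (vecMulVec (star a) a)) *ᵥ b := by
  have hv : ∀ k l, Φ (vecMulVec (star a) a) k l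
      = ∑ i, ∑ j, (starRingEnd ℂ) (a i) * a j * choi Φ ((i,k) : ιA × ιB) ((j,l) : ιA × ιB) := by
    intro k l
    rw [map_entry]
    simp [vecMulVec_apply]
  calc star (fun p : ιA × ιB => a p.1 * b p.2) ⬝ᵥ choi Φ *ᵥ (fun p : ιA × ιB => a p.1 * b p.2)
      = ∑ i, ∑ k, ∑ j, ∑ l, (starRingEnd ℂ) (a i) * a j
          * choi Φ ((i,k) : ιA × ιB) ((j,l) : ιA × ιB) * ((starRingEnd ℂ) (b k) * b l) := by
        simp only [dotProduct, mulVec, Fintype.sum_prod_type, Pi.star_apply, star_mul',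
          Complex.star_def, Finset.mul_sum]
        refine Finset.sum_congr rfl fun i _ => Finset.sum_congr rfl fun k _ =>
          Finset.sum_congr rfl fun j _ => Finset.sum_congr rfl fun l _ => by ring
    _ = ∑ k, ∑ l, ∑ i, ∑ j, (starRingEnd ℂ) (a i) * a j
          * choi Φ ((i,k) : ιA × ιB) ((j,l) : ιA × ιB) * ((starRingEnd ℂ) (b k) * b l) :=
        sum4 _
    _ = star b ⬝ᵥ (Φ (vecMulVec (star a) a)) *ᵥ b := by
        simp only [dotProduct, mulVec, hv, Pi.star_apply, Complex.star_def, Finset.mul_sum,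
          Finset.sum_mul]
        refine Finset.sum_congr rfl fun k _ => Finset.sum_congr rfl fun l _ =>
          Finset.sum_congr rfl fun i _ => Finset.sum_congr rfl fun j _ => by ring

lemma map_conjTranspose (Φ : Matrix ιA ιA ℂ →ₗ[ℂ] Matrix ιB ιB ℂ)
    (hJ : (choi Φ).IsHermitian) (X : Matrix ιA ιA ℂ) :
    Φ Xᴴ = (Φ X)ᴴ := by
  ext k l
  rw [conjTranspose_apply]
  calc Φ Xᴴ k l = ∑ i, ∑ j, (starRingEnd ℂ) (X j i)
        * choi Φ ((i,k) : ιA × ιB) ((j,l) : ιA × ιB) := by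
        rw [map_entry]
        refine Finset.sum_congr rfl fun i _ => Finset.sum_congr rfl fun j _ => ?_
        rw [conjTranspose_apply]
        rfl
    _ = ∑ i, ∑ j, (starRingEnd ℂ) (X i j) * choi Φ ((j,k) : ιA × ιB) ((i,l) : ιA × ιB) :=
        Finset.sum_comm
    _ = star (Φ X l k) := by
        rw [map_entry, star_sum]
        refine Finset.sum_congr rfl fun i _ => ?_
        rw [star_sum]
        refine Finset.sum_congr rfl fun j _ => ?_
        rw [star_mul']
        congr 1
        have := congrFun (congrFun hJ ((j,k) : ιA × ιB)) ((i,l) : ιA × ιB)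
        rw [conjTranspose_apply] at this
        exact this.symm

lemma rankOne_posSemidef (a : ιA → ℂ) : (vecMulVec (star a) a).PosSemidef := by
  refine Matrix.PosSemidef.of_dotProduct_mulVec_nonneg ?_ ?_
  · ext i j
    simp only [conjTranspose_apply, vecMulVec_apply, Pi.star_apply, star_mul', star_star]
    ring
  · intro x
    have h : star x ⬝ᵥ (vecMulVec (star a) a) *ᵥ x = star (a ⬝ᵥ x) * (a ⬝ᵥ x) := by
      simp only [dotProduct, mulVec, vecMulVec_apply, Pi.star_apply, Complex.star_def,
        map_sum, Finset.sum_mul, Finset.mul_sum, _root_.map_mul]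
      conv_rhs => rw [Finset.sum_comm]
      refine Finset.sum_congr rfl fun i _ => Finset.sum_congr rfl fun j _ => by ring
    rw [h]
    exact star_mul_self_nonneg _

lemma trace_rankOne (a : ιA → ℂ) :
    (vecMulVec (star a) a).trace = ((∑ i, ‖a i‖^2 : ℝ) : ℂ) := by
  rw [Matrix.trace]
  push_cast
  refine Finset.sum_congr rfl fun i _ => ?_
  simp only [Matrix.diag_apply, vecMulVec_apply, Pi.star_apply, Complex.star_def]
  rw [mul_comm, Complex.mul_conj]
  rw [Complex.normSq_eq_norm_sq]
  norm_cast

lemma isDensity_rankOne {a : ιA → ℂ} (ha : (∑ i, ‖a i‖^2) = 1) :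
    IsDensity (vecMulVec (star a) a) := by
  refine ⟨rankOne_posSemidef a, ?_⟩
  rw [trace_rankOne, ha, Complex.ofReal_one]

lemma map_rankOne_posSemidef (Φ : Matrix ιA ιA ℂ →ₗ[ℂ] Matrix ιB ιB ℂ)
    (hJ : (choi Φ).PosSemidef) (a : ιA → ℂ) :
    (Φ (vecMulVec (star a) a)).PosSemidef := by
  refine Matrix.PosSemidef.of_dotProduct_mulVec_nonneg ?_ ?_
  · have h1 := map_conjTranspose Φ hJ.1 (vecMulVec (star a) a)
    have h2 : (vecMulVec (star a) a)ᴴ = vecMulVec (star a) a :=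
      (rankOne_posSemidef a).1
    rw [Matrix.IsHermitian, ← h1, h2]
  · intro x
    rw [← key_identity]
    exact hJ.dotProduct_mulVec_nonneg _

lemma map_posSemidef (Φ : Matrix ιA ιA ℂ →ₗ[ℂ] Matrix ιB ιB ℂ)
    (hJ : (choi Φ).PosSemidef) {ρ : Matrix ιA ιA ℂ} (hρ : ρ.PosSemidef) :
    (Φ ρ).PosSemidef := by
  obtain ⟨B, hB⟩ : ∃ B : Matrix ιA ιA ℂ, ρ = Bᴴ * B := by
    open scoped MatrixOrder in
    exact CStarAlgebra.nonneg_iff_eq_star_mul_self.mp hρ.nonneg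
  have hdec : ρ = ∑ k, vecMulVec (star (fun i => B k i)) (fun i => B k i) := by
    rw [hB]
    ext i j
    simp only [Matrix.mul_apply, conjTranspose_apply, Matrix.sum_apply, vecMulVec_apply,
      Pi.star_apply]
  rw [hdec, map_sum]
  refine Finset.sum_induction _ _ (fun x y hx hy => hx.add hy) Matrix.PosSemidef.zero
    fun k _ => map_rankOne_posSemidef Φ hJ _

lemma mulVec_sum {κ : Type*} [Fintype κ] (A : κ → Matrix ιB ιB ℂ) (b : ιB → ℂ) :
    (∑ k, A k) *ᵥ b = ∑ k, A k *ᵥ b := by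
  ext i
  simp only [mulVec, dotProduct, Matrix.sum_apply, Finset.sum_apply, Finset.sum_mul]
  exact Finset.sum_comm

lemma dotProduct_sum' {κ : Type*} [Fintype κ] (u : ιB → ℂ) (w : κ → ιB → ℂ) :
    u ⬝ᵥ (∑ k, w k) = ∑ k, u ⬝ᵥ w k := by
  simp only [dotProduct, Finset.sum_apply, Finset.mul_sum]
  exact Finset.sum_comm


section NormLemmas

variable {n : Type*} [Fintype n] [DecidableEq n]

lemma re_quadform_le_norm (M : Matrix n n ℂ) {b : n → ℂ} (hb : (∑ k, ‖b k‖^2) = 1) :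
    (star b ⬝ᵥ M *ᵥ b).re ≤ ‖M‖ := by
  set b' : EuclideanSpace ℂ n := (WithLp.equiv 2 (n → ℂ)).symm b with hb'
  have hnb : ‖b'‖ = 1 := by
    rw [EuclideanSpace.norm_eq]
    simp only [hb', WithLp.equiv_symm_apply, WithLp.ofLp_toLp]
    rw [hb, Real.sqrt_one]
  set w : EuclideanSpace ℂ n := (WithLp.equiv 2 (n → ℂ)).symm (M *ᵥ b) with hw
  have hinner : (inner ℂ b' w : ℂ) = star b ⬝ᵥ M *ᵥ b := by
    rw [EuclideanSpace.inner_eq_star_dotProduct]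
    simp [hb', hw, dotProduct, mulVec]
    exact Finset.sum_congr rfl fun x _ => mul_comm _ _
  have h1 : (star b ⬝ᵥ M *ᵥ b).re ≤ ‖(inner ℂ b' w : ℂ)‖ := by
    rw [hinner]; exact Complex.re_le_norm _
  refine h1.trans ?_
  have h2 : ‖(inner ℂ b' w : ℂ)‖ ≤ ‖b'‖ * ‖w‖ := norm_inner_le_norm b' w
  have h3 : ‖w‖ ≤ ‖M‖ * ‖b'‖ := by
    have := M.l2_opNorm_mulVec b'
    simpa [hw, hb'] using this
  calc ‖(inner ℂ b' w : ℂ)‖ ≤ ‖b'‖ * ‖w‖ := h2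
    _ ≤ 1 * (‖M‖ * 1) := by rw [hnb]; simpa [hnb] using h3
    _ = ‖M‖ := by ring

lemma l2_opNorm_diagonal_le {d : n → ℂ} {r : ℝ} (hr : 0 ≤ r) (hd : ∀ i, ‖d i‖ ≤ r) :
    ‖(Matrix.diagonal d : Matrix n n ℂ)‖ ≤ r := by
  rw [Matrix.l2_opNorm_def]
  refine ContinuousLinearMap.opNorm_le_bound _ hr fun x => ?_
  have hx : (LinearEquiv.trans (toEuclideanLin) (LinearMap.toContinuousLinearMap)
        (Matrix.diagonal d)) x
      = (WithLp.equiv 2 (n → ℂ)).symm (Matrix.diagonal d *ᵥ (WithLp.equiv 2 (n → ℂ)) x) := rfl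
  rw [hx]
  rw [EuclideanSpace.norm_eq, EuclideanSpace.norm_eq]
  have key : ∑ i, ‖((WithLp.equiv 2 (n → ℂ)).symm
        (Matrix.diagonal d *ᵥ (WithLp.equiv 2 (n → ℂ)) x)) i‖^2
      ≤ r^2 * ∑ i, ‖x i‖^2 := by
    rw [Finset.mul_sum]
    refine Finset.sum_le_sum fun i _ => ?_
    simp only [WithLp.equiv_symm_apply, WithLp.ofLp_toLp, mulVec_diagonal]
    rw [norm_mul, mul_pow]
    have h4 : ‖d i‖^2 ≤ r^2 := by
      have := hd i
      nlinarith [norm_nonneg (d i)]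
    have hx2 : (0:ℝ) ≤ ‖(WithLp.equiv 2 (n → ℂ)) x i‖^2 := sq_nonneg _
    calc ‖d i‖^2 * ‖(WithLp.equiv 2 (n → ℂ)) x i‖^2 ≤ r^2 * ‖(WithLp.equiv 2 (n → ℂ)) x i‖^2 :=
          mul_le_mul_of_nonneg_right h4 hx2
      _ = r^2 * ‖x i‖^2 := rfl
  calc Real.sqrt (∑ i, ‖_‖^2) ≤ Real.sqrt (r^2 * ∑ i, ‖x i‖^2) := Real.sqrt_le_sqrt key
    _ = r * Real.sqrt (∑ i, ‖x i‖^2) := by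
        rw [Real.sqrt_mul (sq_nonneg r), Real.sqrt_sq hr]

lemma norm_le_of_quadform [Nonempty n] {M : Matrix n n ℂ} (hM : M.PosSemidef) {r : ℝ}
    (h : ∀ b : n → ℂ, (∑ k, ‖b k‖^2) = 1 → (star b ⬝ᵥ M *ᵥ b).re ≤ r) : ‖M‖ ≤ r := by
  have hH : M.IsHermitian := hM.1
  have hr : 0 ≤ r := by
    classical
    obtain ⟨i0⟩ := ‹Nonempty n›
    have hb : (∑ k, ‖(Pi.single i0 (1:ℂ) : n → ℂ) k‖^2) = 1 := by
      simp [Pi.single_apply, apply_ite (‖·‖)]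
    refine le_trans ?_ (h _ hb)
    have := hM.dotProduct_mulVec_nonneg (Pi.single i0 (1:ℂ))
    rw [Complex.le_def] at this
    simpa using this.1
  have heig : ∀ i, hH.eigenvalues i ≤ r := by
    intro i
    have hb : (∑ k, ‖(hH.eigenvectorBasis i : EuclideanSpace ℂ n) k‖^2) = 1 := by
      have hn : ‖(hH.eigenvectorBasis i : EuclideanSpace ℂ n)‖ = 1 :=
        hH.eigenvectorBasis.orthonormal.1 i
      rw [EuclideanSpace.norm_eq] at hn
      have := congrArg (·^2) hn
      simpa [Real.sq_sqrt (Finset.sum_nonneg fun k _ => sq_nonneg _)] using this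
    have hle := h _ hb
    rw [hH.eigenvalues_eq i]
    simpa [RCLike.re_to_complex] using hle
  have heig0 : ∀ i, 0 ≤ hH.eigenvalues i := hM.eigenvalues_nonneg
  haveI hnontriv : Nontrivial (Matrix n n ℂ) := by
    refine ⟨0, 1, fun hc => ?_⟩
    obtain ⟨i0⟩ := ‹Nonempty n›
    have := congrFun (congrFun hc i0) i0
    simp [Matrix.one_apply] at this
  rw [hH.spectral_theorem, Unitary.conjStarAlgAut_apply, mul_assoc, CStarRing.norm_coe_unitary_mul,
    CStarRing.norm_mul_mem_unitary _ (Unitary.star_mem (hH.eigenvectorUnitary).2)]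
  refine l2_opNorm_diagonal_le hr fun i => ?_
  simp only [Function.comp_apply, RCLike.norm_ofReal, abs_of_nonneg (heig0 i)]
  exact heig i

end NormLemmas

lemma lam2_bddAbove (ω : Matrix (ιA × ιB) (ιA × ιB) ℂ) :
    BddAbove {r | ∃ (a : ιA → ℂ) (b : ιB → ℂ),
      (∑ i, ‖a i‖ ^ 2) = 1 ∧ (∑ k, ‖b k‖ ^ 2) = 1 ∧
        r = (star (fun p : ιA × ιB => a p.1 * b p.2) ⬝ᵥ
          ω *ᵥ fun p : ιA × ιB => a p.1 * b p.2).re} := by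
  refine ⟨‖ω‖, ?_⟩
  rintro r ⟨a, b, ha, hb, rfl⟩
  refine re_quadform_le_norm ω ?_
  rw [Fintype.sum_prod_type]
  calc ∑ i, ∑ k, ‖a i * b k‖^2 = ∑ i, ∑ k, ‖a i‖^2 * ‖b k‖^2 := by
        simp [norm_mul, mul_pow]
    _ = (∑ i, ‖a i‖^2) * (∑ k, ‖b k‖^2) := (Finset.sum_mul_sum _ _ _ _).symm
    _ = 1 := by rw [ha, hb, one_mul]

lemma prodvec_unit {a : ιA → ℂ} {b : ιB → ℂ} (ha : (∑ i, ‖a i‖ ^ 2) = 1)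
    (hb : (∑ k, ‖b k‖ ^ 2) = 1) :
    (∑ p : ιA × ιB, ‖a p.1 * b p.2‖ ^ 2) = 1 := by
  rw [Fintype.sum_prod_type]
  calc ∑ i, ∑ k, ‖a i * b k‖^2 = ∑ i, ∑ k, ‖a i‖^2 * ‖b k‖^2 := by
        simp [norm_mul, mul_pow]
    _ = (∑ i, ‖a i‖^2) * (∑ k, ‖b k‖^2) := (Finset.sum_mul_sum _ _ _ _).symm
    _ = 1 := by rw [ha, hb, one_mul]

lemma quadform_le_lam2 (N : Channel ιA ιB) {ρ : Matrix ιA ιA ℂ} (hρ : IsDensity ρ)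
    {b : ιB → ℂ} (hb : (∑ k, ‖b k‖^2) = 1) :
    (star b ⬝ᵥ (N.map ρ) *ᵥ b).re ≤ lam2 (choi N.map) := by
  classical
  obtain ⟨B, hB⟩ : ∃ B : Matrix ιA ιA ℂ, ρ = Bᴴ * B := by
    open scoped MatrixOrder in
    exact CStarAlgebra.nonneg_iff_eq_star_mul_self.mp hρ.1.nonneg
  set t : ιA → ℝ := fun k => ∑ i, ‖B k i‖^2 with ht
  have ht0 : ∀ k, 0 ≤ t k := fun k => Finset.sum_nonneg fun i _ => sq_nonneg _
  have htr : ∀ k : ιA, (vecMulVec (star (fun i => B k i)) (fun i => B k i)).trace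
      = ((t k : ℝ) : ℂ) := fun k => trace_rankOne _
  have hdec : ρ = ∑ k, vecMulVec (star (fun i => B k i)) (fun i => B k i) := by
    rw [hB]
    ext i j
    simp only [Matrix.mul_apply, conjTranspose_apply, Matrix.sum_apply, vecMulVec_apply,
      Pi.star_apply]
  have htsum : ∑ k, t k = 1 := by
    have h1 : ρ.trace = ((∑ k, t k : ℝ) : ℂ) := by
      rw [hdec, Matrix.trace_sum]
      push_cast
      exact Finset.sum_congr rfl fun k _ => htr k
    rw [hρ.2] at h1
    exact_mod_cast h1.symm
  have hsplit : (star b ⬝ᵥ (N.map ρ) *ᵥ b).re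
      = ∑ k, (star b ⬝ᵥ (N.map (vecMulVec (star (fun i => B k i)) (fun i => B k i))) *ᵥ b).re := by
    rw [hdec, map_sum, mulVec_sum, dotProduct_sum', Complex.re_sum]
  rw [hsplit]
  have hterm : ∀ k, (star b ⬝ᵥ (N.map (vecMulVec (star (fun i => B k i))
      (fun i => B k i))) *ᵥ b).re ≤ t k * lam2 (choi N.map) := by
    intro k
    by_cases h0 : t k = 0
    · have hz : (fun i => B k i) = 0 := by
        funext i
        have := (Finset.sum_eq_zero_iff_of_nonneg
          (fun i _ => sq_nonneg ‖B k i‖)).mp h0 i (Finset.mem_univ i)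
        have hni : ‖B k i‖ = 0 := by nlinarith [norm_nonneg (B k i)]
        exact norm_eq_zero.mp hni
      have hzero : vecMulVec (star (fun i => B k i)) (fun i => B k i) = 0 := by
        rw [hz]
        ext i j
        simp [vecMulVec_apply]
      rw [hzero, map_zero, h0, zero_mul]
      simp
    · have hpos : 0 < t k := lt_of_le_of_ne (ht0 k) (Ne.symm h0)
      set s : ℝ := Real.sqrt (t k) with hs
      have hspos : 0 < s := Real.sqrt_pos.mpr hpos
      have hss : s * s = t k := Real.mul_self_sqrt (ht0 k)
      set a' : ιA → ℂ := fun i => ((s⁻¹ : ℝ) : ℂ) * B k i with ha'def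
      have hsne : ((s : ℝ) : ℂ) ≠ 0 := Complex.ofReal_ne_zero.mpr (ne_of_gt hspos)
      have ha' : (∑ i, ‖a' i‖^2) = 1 := by
        have hterm : ∀ i, ‖a' i‖^2 = (t k)⁻¹ * ‖B k i‖^2 := by
          intro i
          rw [ha'def]
          rw [norm_mul, mul_pow, Complex.norm_real, Real.norm_eq_abs,
            abs_of_pos (inv_pos.mpr hspos)]
          congr 1
          rw [← hss]
          rw [mul_inv]
          rw [pow_two]
        rw [Finset.sum_congr rfl fun i _ => hterm i, ← Finset.mul_sum]
        exact inv_mul_cancel₀ h0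
      have hscale : vecMulVec (star (fun i => B k i)) (fun i => B k i)
          = ((t k : ℝ) : ℂ) • vecMulVec (star a') a' := by
        have hc : ((t k : ℝ) : ℂ) = ((s : ℝ) : ℂ) * ((s : ℝ) : ℂ) := by
          rw [← hss]; push_cast; ring
        ext i j
        simp only [vecMulVec_apply, Pi.star_apply, ha'def, Matrix.smul_apply, smul_eq_mul,
          Complex.star_def, _root_.map_mul, Complex.conj_ofReal]
        rw [hc]
        field_simp
        push_cast
        field_simp
      have hmap_eq : N.map (vecMulVec (star (fun i => B k i)) (fun i => B k i))
          = ((t k : ℝ) : ℂ) • N.map (vecMulVec (star a') a') := by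
        rw [hscale, LinearMap.map_smul]
      rw [hmap_eq, smul_mulVec, dotProduct_smul, smul_eq_mul, Complex.re_ofReal_mul]
      refine mul_le_mul_of_nonneg_left ?_ (ht0 k)
      exact le_csSup (lam2_bddAbove (choi N.map))
        ⟨a', b, ha', hb, (congrArg Complex.re (key_identity N.map a' b)).symm⟩
  calc ∑ k, (star b ⬝ᵥ (N.map (vecMulVec (star (fun i => B k i)) (fun i => B k i))) *ᵥ b).re
      ≤ ∑ k, t k * lam2 (choi N.map) := Finset.sum_le_sum fun k _ => hterm k
    _ = (∑ k, t k) * lam2 (choi N.map) := (Finset.sum_mul _ _ _).symm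
    _ = lam2 (choi N.map) := by rw [htsum, one_mul]

end NuAux

end

end Aux

/-- The maximum output purity of a channel equals the maximal overlap of its
Choi matrix with product unit vectors. -/
theorem nuInf_eq_lam2_choi {ιA ιB : Type*} [Fintype ιA] [DecidableEq ιA]
    [Fintype ιB] [DecidableEq ιB] [Nonempty ιA] [Nonempty ιB]
    (N : Channel ιA ιB) :
    nuInf N = lam2 (choi N.map) := by
  classical
  obtain ⟨i0⟩ := ‹Nonempty ιA›
  obtain ⟨k0⟩ := ‹Nonempty ιB›
  set a0 : ιA → ℂ := Pi.single i0 1 with ha0def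
  set b0 : ιB → ℂ := Pi.single k0 1 with hb0def
  have ha0 : (∑ i, ‖a0 i‖^2) = 1 := by simp [ha0def, Pi.single_apply, apply_ite (‖·‖)]
  have hb0 : (∑ k, ‖b0 k‖^2) = 1 := by simp [hb0def, Pi.single_apply, apply_ite (‖·‖)]
  have hT_bdd := NuAux.lam2_bddAbove (choi N.map)
  have hmem0 : (star (fun p : ιA × ιB => a0 p.1 * b0 p.2) ⬝ᵥ
      choi N.map *ᵥ fun p : ιA × ιB => a0 p.1 * b0 p.2).re ∈
      {r | ∃ (a : ιA → ℂ) (b : ιB → ℂ),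
        (∑ i, ‖a i‖ ^ 2) = 1 ∧ (∑ k, ‖b k‖ ^ 2) = 1 ∧
          r = (star (fun p : ιA × ιB => a p.1 * b p.2) ⬝ᵥ
            choi N.map *ᵥ fun p : ιA × ιB => a p.1 * b p.2).re} :=
    ⟨a0, b0, ha0, hb0, rfl⟩
  have hr0 : 0 ≤ (star (fun p : ιA × ιB => a0 p.1 * b0 p.2) ⬝ᵥ
      choi N.map *ᵥ fun p : ιA × ιB => a0 p.1 * b0 p.2).re := by
    have := N.cp.dotProduct_mulVec_nonneg (fun p : ιA × ιB => a0 p.1 * b0 p.2)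
    rw [Complex.le_def] at this
    simpa using this.1
  have hlam0 : 0 ≤ lam2 (choi N.map) := le_trans hr0 (le_csSup hT_bdd hmem0)
  have hS1_bdd : BddAbove {r | ∃ ρ : Matrix ιA ιA ℂ, IsDensity ρ ∧ r = ‖N.map ρ‖} := by
    refine ⟨lam2 (choi N.map), ?_⟩
    rintro r ⟨ρ, hρ, rfl⟩
    exact NuAux.norm_le_of_quadform (NuAux.map_posSemidef N.map N.cp hρ.1)
      fun b hb => NuAux.quadform_le_lam2 N hρ hb
  apply le_antisymm
  · refine Real.sSup_le ?_ hlam0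
    rintro r ⟨ρ, hρ, rfl⟩
    exact NuAux.norm_le_of_quadform (NuAux.map_posSemidef N.map N.cp hρ.1)
      fun b hb => NuAux.quadform_le_lam2 N hρ hb
  · have hnu0 : 0 ≤ nuInf N := by
      have hd : IsDensity (vecMulVec (star a0) a0) := NuAux.isDensity_rankOne ha0
      exact le_trans (norm_nonneg _) (le_csSup hS1_bdd ⟨_, hd, rfl⟩)
    refine Real.sSup_le ?_ hnu0
    rintro r ⟨a, b, ha, hb, rfl⟩
    have hd : IsDensity (vecMulVec (star a) a) := NuAux.isDensity_rankOne ha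
    have h1 : (star (fun p : ιA × ιB => a p.1 * b p.2) ⬝ᵥ
        choi N.map *ᵥ fun p : ιA × ιB => a p.1 * b p.2).re
          ≤ ‖N.map (vecMulVec (star a) a)‖ := by
      rw [NuAux.key_identity]
      exact NuAux.re_quadform_le_norm _ hb
    exact h1.trans (le_csSup hS1_bdd ⟨_, hd, rfl⟩)
end

section
/- For a qubit channel N with Choi matrix J_N having 3×3 correlation matrix A with entries A_{ij} = (1/2)Tr[(σ_i ⊗ σ_j)J_N], the communication value is cv(N) = 1 + σ_max(A), where σ_max(A) is the largest singular value of A. -/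
open scoped BigOperators Kronecker ComplexOrder
open Matrix

/-- The Pauli matrices `σ_1 = X`, `σ_2 = Y`, `σ_3 = Z`. -/
def pauli : Fin 3 → Matrix (Fin 2) (Fin 2) ℂ :=
  ![!![0, 1; 1, 0], !![0, -Complex.I; Complex.I, 0], !![1, 0; 0, -1]]

/-- The 3×3 correlation matrix of the Choi matrix of a qubit channel:
`A_{ij} = (1/2) Tr[(σ_i ⊗ σ_j) J_N]`. -/
noncomputable def corrMatrix (N : Channel (Fin 2) (Fin 2)) : Matrix (Fin 3) (Fin 3) ℝ :=
  Matrix.of fun i j => (((pauli i ⊗ₖ pauli j) * choi N.map).trace).re / 2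

/-- The largest singular value of a real 3×3 matrix,
as the maximum of `uᵀ A v` over unit vectors. -/
noncomputable def sigmaMax (A : Matrix (Fin 3) (Fin 3) ℝ) : ℝ :=
  sSup {r | ∃ u v : Fin 3 → ℝ, (∑ i, u i ^ 2) = 1 ∧ (∑ i, v i ^ 2) = 1 ∧
    r = u ⬝ᵥ A *ᵥ v}

/-! ### Auxiliary machinery for the proof -/

noncomputable section CVqAux
namespace CVq

abbrev M2 := Matrix (Fin 2) (Fin 2) ℂ
abbrev M4 := Matrix (Fin 2 × Fin 2) (Fin 2 × Fin 2) ℂ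

def al (a : M2) : ℝ := (a.trace).re / 2
def xv (a : M2) (i : Fin 3) : ℝ := ((pauli i * a).trace).re / 2

lemma pauli_trace (i : Fin 3) : (pauli i).trace = 0 := by
  fin_cases i <;> simp [pauli, Matrix.trace_fin_two]

lemma herm_entries {a : M2} (ha : a.IsHermitian) :
    a 1 0 = (starRingEnd ℂ) (a 0 1) ∧ (a 0 0).im = 0 ∧ (a 1 1).im = 0 := by
  refine ⟨?_, ?_, ?_⟩
  · have := congrFun (congrFun ha.symm 1) 0
    simpa [Matrix.conjTranspose_apply] using this
  · have := congrArg Complex.im (congrFun (congrFun ha.symm 0) 0)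
    simp [Matrix.conjTranspose_apply] at this; linarith
  · have := congrArg Complex.im (congrFun (congrFun ha.symm 1) 1)
    simp [Matrix.conjTranspose_apply] at this; linarith

lemma herm_trace {a : M2} (ha : a.IsHermitian) : a.trace = ((2 * al a : ℝ) : ℂ) := by
  obtain ⟨-, h00, h11⟩ := herm_entries ha
  simp [al, Matrix.trace_fin_two, Complex.ext_iff, h00, h11]
  ring

lemma herm_decomp {a : M2} (ha : a.IsHermitian) :
    a = ((al a : ℝ) : ℂ) • 1 + ∑ i, ((xv a i : ℝ) : ℂ) • pauli i := by
  obtain ⟨h10, h00, h11⟩ := herm_entries ha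
  ext i j
  fin_cases i <;> fin_cases j <;>
    simp [al, xv, pauli, Matrix.trace_fin_two, Matrix.mul_apply, Fin.sum_univ_two,
      Fin.sum_univ_three, h10, Matrix.one_apply, Complex.ext_iff] <;>
    simp [Complex.add_re, Complex.add_im, Complex.mul_re, Complex.mul_im, h00, h11] <;>
    ring_nf

lemma psd_diag {a : M2} (ha : a.PosSemidef) : 0 ≤ (a 0 0).re ∧ 0 ≤ (a 1 1).re := by
  constructor
  · have := ha.dotProduct_mulVec_nonneg ![1, 0]
    rw [Complex.le_def] at this
    have h := this.1
    simpa [dotProduct, Matrix.mulVec, Fin.sum_univ_two] using h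
  · have := ha.dotProduct_mulVec_nonneg ![0, 1]
    rw [Complex.le_def] at this
    have h := this.1
    simpa [dotProduct, Matrix.mulVec, Fin.sum_univ_two] using h

lemma psd_offdiag {a : M2} (ha : a.PosSemidef) :
    Complex.normSq (a 0 1) ≤ (a 0 0).re * (a 1 1).re := by
  have h10 : a 1 0 = (starRingEnd ℂ) (a 0 1) := by
    have := congrFun (congrFun ha.1.symm 1) 0
    simpa [Matrix.conjTranspose_apply] using this
  obtain ⟨h00, h11⟩ := psd_diag ha
  have h00i : (a 0 0).im = 0 := by
    have := congrArg Complex.im (congrFun (congrFun ha.1.symm 0) 0)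
    simp [Matrix.conjTranspose_apply] at this; linarith
  have h11i : (a 1 1).im = 0 := by
    have := congrArg Complex.im (congrFun (congrFun ha.1.symm 1) 1)
    simp [Matrix.conjTranspose_apply] at this; linarith
  have key : ∀ s : ℝ, 0 ≤ (a 1 1).re * (s * s) + (2 * Complex.normSq (a 0 1)) * s
      + (a 0 0).re * Complex.normSq (a 0 1) := by
    intro s
    have := ha.dotProduct_mulVec_nonneg ![a 0 1, (s : ℂ)]
    rw [Complex.le_def] at this
    have h := this.1
    simp only [dotProduct, Matrix.mulVec, Fin.sum_univ_two] at h
    simp [Matrix.cons_val_zero, Matrix.cons_val_one, Complex.add_re, Complex.mul_re,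
      Complex.mul_im, Complex.conj_re, Complex.conj_im, Complex.normSq, h10,
      Complex.ofReal_re, Complex.ofReal_im, h00i, h11i] at h ⊢
    nlinarith [h]
  have hd := discrim_le_zero (a := (a 1 1).re) (b := 2 * Complex.normSq (a 0 1))
    (c := (a 0 0).re * Complex.normSq (a 0 1)) key
  rw [discrim] at hd
  nlinarith [hd, mul_nonneg h00 h11, Complex.normSq_nonneg (a 0 1)]

lemma xv_sq_le {a : M2} (ha : a.PosSemidef) : (∑ i, xv a i ^ 2) ≤ al a ^ 2 := by
  have h10 : a 1 0 = (starRingEnd ℂ) (a 0 1) := by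
    have := congrFun (congrFun ha.1.symm 1) 0
    simpa [Matrix.conjTranspose_apply] using this
  have hoff := psd_offdiag ha
  simp only [xv, al, Fin.sum_univ_three, pauli, Matrix.trace_fin_two, Matrix.mul_apply,
    Fin.sum_univ_two] at *
  simp [h10, Complex.add_re, Complex.mul_re, Complex.normSq] at *
  nlinarith [hoff]

lemma al_nonneg {a : M2} (ha : a.PosSemidef) : 0 ≤ al a := by
  obtain ⟨h1, h2⟩ := psd_diag ha
  simp [al, Matrix.trace_fin_two]
  linarith

/-! ### Bloch states -/

def bl (u : Fin 3 → ℝ) : M2 :=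
  ((1/2 : ℝ) : ℂ) • (1 + ∑ i, ((u i : ℝ) : ℂ) • pauli i)

lemma bl_apply (u : Fin 3 → ℝ) :
    bl u = ((1/2 : ℝ) : ℂ) •
      !![((1:ℂ) + u 2), ((u 0 : ℂ) - Complex.I * u 1);
         ((u 0 : ℂ) + Complex.I * u 1), ((1:ℂ) - u 2)] := by
  ext i j
  fin_cases i <;> fin_cases j <;>
    simp [bl, pauli, Fin.sum_univ_three, Matrix.one_apply, Complex.ext_iff] <;> ring

lemma bl_posSemidef {u : Fin 3 → ℝ} (hu : (∑ i, u i ^ 2) ≤ 1) : (bl u).PosSemidef := by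
  rw [bl_apply]
  refine Matrix.posSemidef_iff_dotProduct_mulVec.mpr ⟨?_, ?_⟩
  · ext i j
    fin_cases i <;> fin_cases j <;>
      simp [Matrix.conjTranspose_apply, Complex.ext_iff] <;> ring
  · intro v
    rw [Complex.le_def]
    constructor
    · simp only [dotProduct, Matrix.mulVec, Fin.sum_univ_two, Matrix.smul_apply,
        Matrix.cons_val_zero, Matrix.cons_val_one, Matrix.head_cons, Pi.star_apply]
      set v0 := v 0; set v1 := v 1
      have hCS : (u 0 * (2 * ((starRingEnd ℂ v0 * v1).re)) + u 1 * (2 * ((starRingEnd ℂ v0 * v1).im))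
          + u 2 * (Complex.normSq v0 - Complex.normSq v1)) ^ 2
          ≤ (∑ i, u i ^ 2) * ((2 * ((starRingEnd ℂ v0 * v1).re)) ^ 2 + (2 * ((starRingEnd ℂ v0 * v1).im)) ^ 2
            + (Complex.normSq v0 - Complex.normSq v1) ^ 2) := by
        have := Finset.sum_mul_sq_le_sq_mul_sq Finset.univ u
          ![2 * ((starRingEnd ℂ v0 * v1).re), 2 * ((starRingEnd ℂ v0 * v1).im),
            Complex.normSq v0 - Complex.normSq v1]
        simpa [Fin.sum_univ_three] using this
      have hw : (2 * ((starRingEnd ℂ v0 * v1).re)) ^ 2 + (2 * ((starRingEnd ℂ v0 * v1).im)) ^ 2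
          + (Complex.normSq v0 - Complex.normSq v1) ^ 2
          = (Complex.normSq v0 + Complex.normSq v1) ^ 2 := by
        simp [Complex.normSq, Complex.mul_re, Complex.mul_im, Complex.conj_re, Complex.conj_im]
        ring
      rw [hw] at hCS
      simp [Complex.add_re, Complex.mul_re, Complex.mul_im, Complex.conj_re, Complex.conj_im,
        Complex.normSq] at hCS ⊢
      nlinarith [hCS, sq_nonneg (Complex.normSq v0 + Complex.normSq v1), hu,
        Complex.normSq_nonneg v0, Complex.normSq_nonneg v1]
    · simp only [dotProduct, Matrix.mulVec, Fin.sum_univ_two, Matrix.smul_apply,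
        Matrix.cons_val_zero, Matrix.cons_val_one, Matrix.head_cons, Pi.star_apply]
      simp [Complex.add_im, Complex.mul_re, Complex.mul_im, Complex.conj_re, Complex.conj_im]
      ring

lemma bl_trace (u : Fin 3 → ℝ) : (bl u).trace = 1 := by
  rw [bl_apply]
  simp [Matrix.trace_fin_two, Complex.ext_iff]
  ring

lemma al_bl (u : Fin 3 → ℝ) : al (bl u) = 1/2 := by
  simp [al, bl_trace]

lemma xv_bl (u : Fin 3 → ℝ) (i : Fin 3) : xv (bl u) i = u i / 2 := by
  fin_cases i <;>
    simp [xv, bl_apply, pauli, Matrix.trace_fin_two, Matrix.mul_apply, Fin.sum_univ_two,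
      Complex.add_re, Complex.mul_re, Complex.mul_im] <;> ring

lemma bl_add_neg (u : Fin 3 → ℝ) : bl u + bl (fun i => -u i) = 1 := by
  rw [bl_apply, bl_apply]
  ext i j
  fin_cases i <;> fin_cases j <;> simp [Matrix.one_apply, Complex.ext_iff] <;> ring

/-! ### Core trace identity -/

lemma core_identity (J : M4) {a b : M2} (ha : a.IsHermitian) (hb : b.IsHermitian) :
    ((a ⊗ₖ b) * J).trace
      = ((al a * al b : ℝ) : ℂ) * J.trace
        + ∑ j, ((al a * xv b j : ℝ) : ℂ) * (((1 : M2) ⊗ₖ pauli j) * J).trace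
        + ∑ i, ((xv a i * al b : ℝ) : ℂ) * ((pauli i ⊗ₖ (1 : M2)) * J).trace
        + ∑ i, ∑ j, ((xv a i * xv b j : ℝ) : ℂ) * ((pauli i ⊗ₖ pauli j) * J).trace := by
  conv_lhs => rw [herm_decomp ha, herm_decomp hb]
  simp only [Fin.sum_univ_three, add_kronecker, kronecker_add, smul_kronecker, kronecker_smul,
    add_mul, smul_mul_assoc, Matrix.trace_add, Matrix.trace_smul, smul_eq_mul,
    Matrix.one_kronecker_one, Matrix.one_mul, Complex.ofReal_mul]
  ring

/-! ### Choi matrix facts from trace preservation -/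

lemma trace_kron_one (N : Channel (Fin 2) (Fin 2)) (m : M2) :
    ((m ⊗ₖ (1:M2)) * choi N.map).trace = m.trace := by
  have h00 := N.tp (Matrix.single 0 0 1)
  have h01 := N.tp (Matrix.single 0 1 1)
  have h10 := N.tp (Matrix.single 1 0 1)
  have h11 := N.tp (Matrix.single 1 1 1)
  simp only [Matrix.trace, Matrix.diag, Matrix.mul_apply, Fintype.sum_prod_type,
    Fin.sum_univ_two, choi, Matrix.kroneckerMap_apply, Matrix.one_apply, Matrix.of_apply,
    Matrix.single, Fin.isValue] at h00 h01 h10 h11 ⊢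
  norm_num at h00 h01 h10 h11 ⊢
  linear_combination m 0 0 * h00 + m 0 1 * h10 + m 1 0 * h01 + m 1 1 * h11

lemma choi_trace (N : Channel (Fin 2) (Fin 2)) : (choi N.map).trace = 2 := by
  have := trace_kron_one N 1
  simpa [Matrix.one_kronecker_one, Matrix.one_mul, Matrix.trace_one] using this

/-- Real-part core identity, specialized to the Choi matrix. -/
lemma core_re (N : Channel (Fin 2) (Fin 2)) {a b : M2}
    (ha : a.IsHermitian) (hb : b.IsHermitian) :
    (((a ⊗ₖ b) * choi N.map).trace).re
      = 2 * al a * al b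
        + al a * ∑ j, xv b j * ((((1 : M2) ⊗ₖ pauli j) * choi N.map).trace).re
        + ∑ i, ∑ j, xv a i * (2 * corrMatrix N i j) * xv b j := by
  have hc : ∀ i j : Fin 3, ((pauli i ⊗ₖ pauli j) * choi N.map).trace.re
      = 2 * corrMatrix N i j := by
    intro i j
    simp [corrMatrix]
    ring
  rw [core_identity (choi N.map) ha hb, choi_trace N]
  simp only [Complex.add_re, Complex.re_sum, Complex.re_ofReal_mul, trace_kron_one N,
    pauli_trace, Complex.zero_re, mul_zero, Finset.sum_const_zero, add_zero, hc,
    Complex.re_ofNat]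
  congr 1
  · congr 1
    · ring
    · rw [Finset.mul_sum]
      exact Finset.sum_congr rfl fun j _ => by ring
  · exact Finset.sum_congr rfl fun i _ => Finset.sum_congr rfl fun j _ => by ring

/-! ### `sigmaMax` facts -/

lemma sset_bddAbove (A : Matrix (Fin 3) (Fin 3) ℝ) :
    BddAbove {r | ∃ u v : Fin 3 → ℝ, (∑ i, u i ^ 2) = 1 ∧ (∑ i, v i ^ 2) = 1 ∧
      r = u ⬝ᵥ A *ᵥ v} := by
  refine ⟨∑ i, ∑ j, |A i j|, ?_⟩
  rintro r ⟨u, v, hu, hv, rfl⟩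
  have habs : ∀ (w : Fin 3 → ℝ), (∑ i, w i ^ 2) = 1 → ∀ i, |w i| ≤ 1 := by
    intro w hw i
    have h1 : w i ^ 2 ≤ 1 := by
      rw [← hw]
      exact Finset.single_le_sum (fun j _ => sq_nonneg (w j)) (Finset.mem_univ i)
    nlinarith [abs_nonneg (w i), sq_abs (w i)]
  have : u ⬝ᵥ A *ᵥ v = ∑ i, ∑ j, u i * (A i j * v j) := by
    simp [dotProduct, Matrix.mulVec, Finset.mul_sum]
  rw [this]
  refine Finset.sum_le_sum fun i _ => Finset.sum_le_sum fun j _ => ?_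
  have h1 := habs u hu i
  have h2 := habs v hv j
  have he : |u i * (A i j * v j)| = |u i| * |A i j| * |v j| := by
    rw [abs_mul, abs_mul]; ring
  calc u i * (A i j * v j) ≤ |u i * (A i j * v j)| := le_abs_self _
    _ = |u i| * |A i j| * |v j| := he
    _ ≤ 1 * |A i j| * 1 := by gcongr
    _ = |A i j| := by ring

lemma e1_unit : (∑ i, (![1,0,0] : Fin 3 → ℝ) i ^ 2) = 1 := by
  simp [Fin.sum_univ_three]

lemma le_sigmaMax (A : Matrix (Fin 3) (Fin 3) ℝ) {u v : Fin 3 → ℝ}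
    (hu : (∑ i, u i ^ 2) = 1) (hv : (∑ i, v i ^ 2) = 1) :
    u ⬝ᵥ A *ᵥ v ≤ sigmaMax A :=
  le_csSup (sset_bddAbove A) ⟨u, v, hu, hv, rfl⟩

lemma sigmaMax_nonneg (A : Matrix (Fin 3) (Fin 3) ℝ) : 0 ≤ sigmaMax A := by
  have h1 := le_sigmaMax A e1_unit e1_unit
  have hneg : (∑ i, (fun i => -(![1,0,0] : Fin 3 → ℝ) i) i ^ 2) = 1 := by
    simp [Fin.sum_univ_three]
  have h2 := le_sigmaMax A hneg e1_unit
  have : (fun i => -(![1,0,0] : Fin 3 → ℝ) i) ⬝ᵥ A *ᵥ ![1,0,0]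
      = -((![1,0,0] : Fin 3 → ℝ) ⬝ᵥ A *ᵥ ![1,0,0]) := by
    simp [dotProduct, Fin.sum_univ_three]
  rw [this] at h2
  linarith

lemma sigmaMax_attained (A : Matrix (Fin 3) (Fin 3) ℝ) :
    ∃ u v : Fin 3 → ℝ, (∑ i, u i ^ 2) = 1 ∧ (∑ i, v i ^ 2) = 1 ∧
      u ⬝ᵥ A *ᵥ v = sigmaMax A := by
  classical
  set K : Set (Fin 3 → ℝ) := {u | (∑ i, u i ^ 2) = 1} with hK
  have hKclosed : IsClosed K := by
    have : Continuous fun u : Fin 3 → ℝ => ∑ i, u i ^ 2 :=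
      continuous_finset_sum _ fun i _ => (continuous_apply i).pow 2
    exact isClosed_eq this continuous_const
  have hKsub : K ⊆ Set.pi Set.univ fun _ => Set.Icc (-1:ℝ) 1 := by
    intro u hu i _
    have h1 : u i ^ 2 ≤ 1 := by
      rw [← hu]
      exact Finset.single_le_sum (fun j _ => sq_nonneg (u j)) (Finset.mem_univ i)
    constructor <;> nlinarith
  have hKcomp : IsCompact K :=
    (isCompact_univ_pi fun _ => isCompact_Icc).of_isClosed_subset hKclosed hKsub
  have hf : Continuous fun p : (Fin 3 → ℝ) × (Fin 3 → ℝ) => p.1 ⬝ᵥ A *ᵥ p.2 := by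
    simp only [dotProduct, Matrix.mulVec]
    exact continuous_finset_sum _ fun i _ =>
      ((continuous_apply i).comp continuous_fst).mul
        (continuous_finset_sum _ fun j _ =>
          (continuous_const.mul ((continuous_apply j).comp continuous_snd)))
  have himg : IsCompact ((fun p : (Fin 3 → ℝ) × (Fin 3 → ℝ) => p.1 ⬝ᵥ A *ᵥ p.2) '' (K ×ˢ K)) :=
    (hKcomp.prod hKcomp).image hf
  have hset : {r | ∃ u v : Fin 3 → ℝ, (∑ i, u i ^ 2) = 1 ∧ (∑ i, v i ^ 2) = 1 ∧
      r = u ⬝ᵥ A *ᵥ v}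
      = (fun p : (Fin 3 → ℝ) × (Fin 3 → ℝ) => p.1 ⬝ᵥ A *ᵥ p.2) '' (K ×ˢ K) := by
    ext r
    constructor
    · rintro ⟨u, v, hu, hv, rfl⟩
      exact ⟨(u, v), ⟨hu, hv⟩, rfl⟩
    · rintro ⟨⟨u, v⟩, ⟨hu, hv⟩, rfl⟩
      exact ⟨u, v, hu, hv, rfl⟩
  have hne : {r | ∃ u v : Fin 3 → ℝ, (∑ i, u i ^ 2) = 1 ∧ (∑ i, v i ^ 2) = 1 ∧
      r = u ⬝ᵥ A *ᵥ v}.Nonempty := ⟨_, ![1,0,0], ![1,0,0], e1_unit, e1_unit, rfl⟩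
  rw [hset] at hne
  have hmem := himg.sSup_mem hne
  rw [sigmaMax, hset]
  obtain ⟨⟨u, v⟩, ⟨hu, hv⟩, he⟩ := hmem
  exact ⟨u, v, hu, hv, he⟩

lemma bilinear_bound (A : Matrix (Fin 3) (Fin 3) ℝ) {x y : Fin 3 → ℝ} {α β : ℝ}
    (hx : (∑ i, x i ^ 2) ≤ α ^ 2) (hy : (∑ i, y i ^ 2) ≤ β ^ 2)
    (hα : 0 ≤ α) (hβ : 0 ≤ β) :
    ∑ i, ∑ j, x i * A i j * y j ≤ sigmaMax A * (α * β) := by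
  have hσ := sigmaMax_nonneg A
  by_cases hx0 : (∑ i, x i ^ 2) = 0
  · have : ∀ i, x i = 0 := by
      intro i
      have := (Finset.sum_eq_zero_iff_of_nonneg (fun j _ => sq_nonneg (x j))).mp hx0 i
        (Finset.mem_univ i)
      exact pow_eq_zero_iff (n := 2) (by norm_num) |>.mp this
    simp [this]
    positivity
  by_cases hy0 : (∑ i, y i ^ 2) = 0
  · have : ∀ i, y i = 0 := by
      intro i
      have := (Finset.sum_eq_zero_iff_of_nonneg (fun j _ => sq_nonneg (y j))).mp hy0 i
        (Finset.mem_univ i)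
      exact pow_eq_zero_iff (n := 2) (by norm_num) |>.mp this
    simp [this]
    positivity
  have hxs : 0 < ∑ i, x i ^ 2 :=
    lt_of_le_of_ne (Finset.sum_nonneg fun i _ => sq_nonneg _) (Ne.symm hx0)
  have hys : 0 < ∑ i, y i ^ 2 :=
    lt_of_le_of_ne (Finset.sum_nonneg fun i _ => sq_nonneg _) (Ne.symm hy0)
  set nx := Real.sqrt (∑ i, x i ^ 2) with hnx
  set ny := Real.sqrt (∑ i, y i ^ 2) with hny
  have hnxpos : 0 < nx := Real.sqrt_pos.mpr hxs
  have hnypos : 0 < ny := Real.sqrt_pos.mpr hys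
  have hnxsq : nx ^ 2 = ∑ i, x i ^ 2 := Real.sq_sqrt hxs.le
  have hnysq : ny ^ 2 = ∑ i, y i ^ 2 := Real.sq_sqrt hys.le
  have hnxα : nx ≤ α := by
    nlinarith [hnxsq, hx, hnxpos]
  have hnyβ : ny ≤ β := by
    nlinarith [hnysq, hy, hnypos]
  set u : Fin 3 → ℝ := fun i => x i / nx with hudef
  set v : Fin 3 → ℝ := fun i => y i / ny with hvdef
  have hu : (∑ i, u i ^ 2) = 1 := by
    simp only [hudef, div_pow]
    rw [← Finset.sum_div, ← hnxsq]
    field_simp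
  have hv : (∑ i, v i ^ 2) = 1 := by
    simp only [hvdef, div_pow]
    rw [← Finset.sum_div, ← hnysq]
    field_simp
  have hle := le_sigmaMax A hu hv
  have hdot : u ⬝ᵥ A *ᵥ v = (∑ i, ∑ j, x i * A i j * y j) / (nx * ny) := by
    simp only [dotProduct, Matrix.mulVec, hudef, hvdef, Finset.mul_sum,
      Finset.sum_div]
    refine Finset.sum_congr rfl fun i _ => Finset.sum_congr rfl fun j _ => ?_
    field_simp
  rw [hdot, div_le_iff₀ (by positivity)] at hle
  calc ∑ i, ∑ j, x i * A i j * y j ≤ sigmaMax A * (nx * ny) := hle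
    _ ≤ sigmaMax A * (α * β) := by
        apply mul_le_mul_of_nonneg_left _ hσ
        nlinarith

/-! ### the partial trace -/

lemma ptraceA_kron (a b : M2) : ptraceA (a ⊗ₖ b) = a.trace • b := by
  ext k l
  simp [ptraceA, Matrix.kroneckerMap_apply, Matrix.trace, Matrix.diag, Finset.sum_mul]
  ring

lemma ptraceA_sum {n : ℕ} (f : Fin n → M4) :
    ptraceA (∑ i, f i) = ∑ i, ptraceA (f i) := by
  ext k l
  simp only [ptraceA, Matrix.of_apply, Matrix.sum_apply]
  exact Finset.sum_comm

lemma ptraceA_add (a b : M4) : ptraceA (a + b) = ptraceA a + ptraceA b := by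
  ext k l
  simp [ptraceA, Finset.sum_add_distrib]

end CVq
end CVqAux

/-- The communication value of a qubit channel is `1 + σ_max(A)` where `A` is
the correlation matrix of its Choi matrix. -/
theorem cv_qubit (N : Channel (Fin 2) (Fin 2)) :
    cv N = 1 + sigmaMax (corrMatrix N) := by
  classical
  set σ := sigmaMax (corrMatrix N) with hσdef
  -- notation for the linear functionals
  set T : Fin 3 → ℝ := fun j => ((((1 : CVq.M2) ⊗ₖ pauli j) * choi N.map).trace).re with hT
  -- ### Achievability
  obtain ⟨u, v, hu, hv, huv⟩ := CVq.sigmaMax_attained (corrMatrix N)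
  have hu' : (∑ i, (fun i => -u i) i ^ 2) = 1 := by simpa using hu
  have hv' : (∑ i, (fun i => -v i) i ^ 2) = 1 := by simpa using hv
  have hpu : (CVq.bl u).PosSemidef := CVq.bl_posSemidef hu.le
  have hpv : (CVq.bl v).PosSemidef := CVq.bl_posSemidef hv.le
  have hpu' : (CVq.bl (fun i => -u i)).PosSemidef := CVq.bl_posSemidef hu'.le
  have hpv' : (CVq.bl (fun i => -v i)).PosSemidef := CVq.bl_posSemidef hv'.le
  set Ω₀ : CVq.M4 :=
    CVq.bl u ⊗ₖ CVq.bl v + CVq.bl (fun i => -u i) ⊗ₖ CVq.bl (fun i => -v i) with hΩ₀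
  have hsep : IsSep Ω₀ := by
    refine ⟨2, ![CVq.bl u, CVq.bl (fun i => -u i)], ![CVq.bl v, CVq.bl (fun i => -v i)],
      ?_, ?_, ?_⟩
    · intro i; fin_cases i
      · exact hpu
      · exact hpu'
    · intro i; fin_cases i
      · exact hpv
      · exact hpv'
    · simp [Fin.sum_univ_two, hΩ₀]
  have hpt : ptraceA Ω₀ = 1 := by
    rw [hΩ₀, CVq.ptraceA_add, CVq.ptraceA_kron, CVq.ptraceA_kron, CVq.bl_trace,
      CVq.bl_trace, one_smul, one_smul, CVq.bl_add_neg v]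
  have hval : ((Ω₀ * choi N.map).trace).re = 1 + σ := by
    rw [hΩ₀, add_mul, Matrix.trace_add, Complex.add_re,
      CVq.core_re N hpu.1 hpv.1, CVq.core_re N hpu'.1 hpv'.1]
    simp only [CVq.al_bl, CVq.xv_bl, ← hT]
    have hdot : u ⬝ᵥ corrMatrix N *ᵥ v = ∑ i, ∑ j, u i * (corrMatrix N i j * v j) := by
      simp [dotProduct, Matrix.mulVec, Finset.mul_sum]
    rw [hσdef, ← huv, hdot]
    have hS1 : (∑ j, -v j / 2 * T j) = -(∑ j, v j / 2 * T j) := by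
      rw [← Finset.sum_neg_distrib]
      exact Finset.sum_congr rfl fun j _ => by ring
    have hS2 : (∑ i, ∑ j, u i / 2 * (2 * corrMatrix N i j) * (v j / 2))
        = (1/2) * ∑ i, ∑ j, u i * (corrMatrix N i j * v j) := by
      rw [Finset.mul_sum]
      refine Finset.sum_congr rfl fun i _ => ?_
      rw [Finset.mul_sum]
      exact Finset.sum_congr rfl fun j _ => by ring
    have hS3 : (∑ i, ∑ j, -u i / 2 * (2 * corrMatrix N i j) * (-v j / 2))
        = (1/2) * ∑ i, ∑ j, u i * (corrMatrix N i j * v j) := by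
      rw [Finset.mul_sum]
      refine Finset.sum_congr rfl fun i _ => ?_
      rw [Finset.mul_sum]
      exact Finset.sum_congr rfl fun j _ => by ring
    rw [hS1, hS2, hS3]
    ring
  have hmem : 1 + σ ∈ {r | ∃ Ω : Matrix ((Fin 2) × (Fin 2)) ((Fin 2) × (Fin 2)) ℂ,
      IsSep Ω ∧ ptraceA Ω = 1 ∧ r = ((Ω * choi N.map).trace).re} :=
    ⟨Ω₀, hsep, hpt, hval.symm⟩
  -- ### Upper bound
  have hub : ∀ r ∈ {r | ∃ Ω : Matrix ((Fin 2) × (Fin 2)) ((Fin 2) × (Fin 2)) ℂ,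
      IsSep Ω ∧ ptraceA Ω = 1 ∧ r = ((Ω * choi N.map).trace).re}, r ≤ 1 + σ := by
    rintro r ⟨Ω, ⟨n, a, b, hpa, hpb, rfl⟩, hptΩ, rfl⟩
    -- the partial-trace constraint
    have hc0 : (∑ i, (a i).trace • b i) = (1 : CVq.M2) := by
      rw [CVq.ptraceA_sum] at hptΩ
      simp only [CVq.ptraceA_kron] at hptΩ
      exact hptΩ
    have hc1 : (∑ i, CVq.al (a i) * CVq.al (b i)) = 1/2 := by
      have h := congrArg Matrix.trace hc0
      simp only [Matrix.trace_sum, Matrix.trace_smul, smul_eq_mul, Matrix.trace_one,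
        Fintype.card_fin, Nat.cast_ofNat] at h
      have h2 := congrArg Complex.re h
      rw [Complex.re_sum] at h2
      have h3 : ∀ i, ((a i).trace * (b i).trace).re = 4 * (CVq.al (a i) * CVq.al (b i)) := by
        intro i
        rw [CVq.herm_trace (hpa i).1, Complex.re_ofReal_mul]
        simp [CVq.al]
        ring
      rw [Finset.sum_congr rfl fun i _ => h3 i] at h2
      rw [← Finset.mul_sum] at h2
      norm_num at h2
      linarith
    have hc2 : ∀ j, (∑ i, CVq.al (a i) * CVq.xv (b i) j) = 0 := by
      intro j
      have h := congrArg (fun M : CVq.M2 => (pauli j * M).trace) hc0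
      simp only [Matrix.mul_sum, Matrix.mul_smul, Matrix.trace_sum, Matrix.trace_smul,
        smul_eq_mul, Matrix.mul_one] at h
      rw [CVq.pauli_trace j] at h
      have h2 := congrArg Complex.re h
      rw [Complex.re_sum] at h2
      have h3 : ∀ i, ((a i).trace * (pauli j * b i).trace).re
          = 4 * (CVq.al (a i) * CVq.xv (b i) j) := by
        intro i
        rw [CVq.herm_trace (hpa i).1, Complex.re_ofReal_mul]
        simp [CVq.xv]
        ring
      rw [Finset.sum_congr rfl fun i _ => h3 i] at h2
      rw [← Finset.mul_sum] at h2
      norm_num at h2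
      linarith [h2]
    -- the value
    have hval2 : (((∑ i, a i ⊗ₖ b i) * choi N.map).trace).re
        = ∑ i, (((a i ⊗ₖ b i) * choi N.map).trace).re := by
      rw [Finset.sum_mul, Matrix.trace_sum, Complex.re_sum]
    rw [hval2]
    have hper : ∀ i, (((a i ⊗ₖ b i) * choi N.map).trace).re
        = 2 * CVq.al (a i) * CVq.al (b i)
          + CVq.al (a i) * ∑ j, CVq.xv (b i) j * T j
          + ∑ k, ∑ j, CVq.xv (a i) k * (2 * corrMatrix N k j) * CVq.xv (b i) j := by
      intro i
      rw [CVq.core_re N (hpa i).1 (hpb i).1]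
    rw [Finset.sum_congr rfl fun i _ => hper i]
    rw [Finset.sum_add_distrib, Finset.sum_add_distrib]
    -- first term
    have ht1 : (∑ i, 2 * CVq.al (a i) * CVq.al (b i)) = 1 := by
      have : (∑ i, 2 * CVq.al (a i) * CVq.al (b i))
          = 2 * ∑ i, CVq.al (a i) * CVq.al (b i) := by
        rw [Finset.mul_sum]
        exact Finset.sum_congr rfl fun i _ => by ring
      rw [this, hc1]
      norm_num
    -- second term
    have ht2 : (∑ i, CVq.al (a i) * ∑ j, CVq.xv (b i) j * T j) = 0 := by
      have hswap : (∑ i, CVq.al (a i) * ∑ j, CVq.xv (b i) j * T j)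
          = ∑ j, (∑ i, CVq.al (a i) * CVq.xv (b i) j) * T j := by
        calc (∑ i, CVq.al (a i) * ∑ j, CVq.xv (b i) j * T j)
            = ∑ i, ∑ j, (CVq.al (a i) * CVq.xv (b i) j) * T j := by
              refine Finset.sum_congr rfl fun i _ => ?_
              rw [Finset.mul_sum]
              exact Finset.sum_congr rfl fun j _ => by ring
          _ = ∑ j, ∑ i, (CVq.al (a i) * CVq.xv (b i) j) * T j := Finset.sum_comm
          _ = ∑ j, (∑ i, CVq.al (a i) * CVq.xv (b i) j) * T j := by
              exact Finset.sum_congr rfl fun j _ => (Finset.sum_mul _ _ _).symm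
      rw [hswap]
      simp [hc2]
    -- third term
    have ht3 : (∑ i, ∑ k, ∑ j, CVq.xv (a i) k * (2 * corrMatrix N k j) * CVq.xv (b i) j) ≤ σ := by
      have hbd : ∀ i ∈ Finset.univ, (∑ k, ∑ j, CVq.xv (a i) k * (2 * corrMatrix N k j) * CVq.xv (b i) j)
          ≤ 2 * (σ * (CVq.al (a i) * CVq.al (b i))) := by
        intro i _
        have h := CVq.bilinear_bound (corrMatrix N) (CVq.xv_sq_le (hpa i))
          (CVq.xv_sq_le (hpb i)) (CVq.al_nonneg (hpa i)) (CVq.al_nonneg (hpb i))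
        have heq : (∑ k, ∑ j, CVq.xv (a i) k * (2 * corrMatrix N k j) * CVq.xv (b i) j)
            = 2 * ∑ k, ∑ j, CVq.xv (a i) k * corrMatrix N k j * CVq.xv (b i) j := by
          rw [Finset.mul_sum]
          refine Finset.sum_congr rfl fun k _ => ?_
          rw [Finset.mul_sum]
          exact Finset.sum_congr rfl fun j _ => by ring
        rw [heq]
        rw [hσdef]
        nlinarith [h]
      calc (∑ i, ∑ k, ∑ j, CVq.xv (a i) k * (2 * corrMatrix N k j) * CVq.xv (b i) j)
          ≤ ∑ i, 2 * (σ * (CVq.al (a i) * CVq.al (b i))) := Finset.sum_le_sum hbd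
        _ = 2 * σ * ∑ i, CVq.al (a i) * CVq.al (b i) := by
            rw [Finset.mul_sum]
            exact Finset.sum_congr rfl fun i _ => by ring
        _ = σ := by rw [hc1]; ring
    rw [ht1, ht2]
    linarith
  -- ### Conclusion
  rw [cv]
  exact le_antisymm (csSup_le (Set.nonempty_of_mem hmem) hub) (le_csSup ⟨1 + σ, hub⟩ hmem)
end

section
/- For a Pauli channel N(ρ) = p_0 ρ + p_1 XρX + p_2 ZρZ + p_3 YρY with probabilities p_i summing to 1, the communication value is cv(N) = 2(p↓_1 + p↓_2), twice the sum of the two largest probabilities. -/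
open scoped BigOperators Kronecker ComplexOrder
open Matrix

/-- The gates of a Pauli channel, in the order `I, X, Z, Y`. -/
def pauliGate : Fin 4 → Matrix (Fin 2) (Fin 2) ℂ :=
  ![1, !![0, 1; 1, 0], !![1, 0; 0, -1], !![0, -Complex.I; Complex.I, 0]]

/- ### Auxiliary lemmas -/

set_option maxHeartbeats 1000000 in
private lemma cvP_real_key (M q1 q2 c1 c3 A0 A3 B0 B3 x y u w : ℝ)
    (hq : q1 + q2 = 1) (hq1 : q1 ≤ M) (hq2 : q2 ≤ M)
    (hc1 : c1^2 ≤ (2*M-1)^2) (hc3 : c3^2 ≤ (2*M-1)^2)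
    (hA0 : 0 ≤ A0) (hA3 : 0 ≤ A3) (hB0 : 0 ≤ B0) (hB3 : 0 ≤ B3)
    (ha : x^2 + y^2 ≤ A0*A3) (hb : u^2 + w^2 ≤ B0*B3) :
    q1*(A0*B0 + A3*B3) + q2*(A0*B3 + A3*B0) + 2*c1*x*u - 2*c3*y*w ≤ M*(A0+A3)*(B0+B3) := by
  have hq2' : q2 = 1 - q1 := by linarith
  subst hq2'
  have hP0 : 0 ≤ (M-q1)*A0 + (M-(1-q1))*A3 := by nlinarith
  have hQ0 : 0 ≤ (M-(1-q1))*A0 + (M-q1)*A3 := by nlinarith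
  have hS0 : 0 ≤ B0*((M-q1)*A0 + (M-(1-q1))*A3) + B3*((M-(1-q1))*A0 + (M-q1)*A3) :=
    by positivity
  have h1 : (2*c1*x*u - 2*c3*y*w)^2 ≤ 4 * (u^2+w^2) * (c1^2*x^2 + c3^2*y^2) := by
    nlinarith [sq_nonneg (c1*x*w + c3*y*u)]
  have h2 : c1^2*x^2 + c3^2*y^2 ≤ (2*M-1)^2 * (A0*A3) := by
    nlinarith [sq_nonneg x, sq_nonneg y]
  have h3 : (2*M-1)^2 * (A0*A3) ≤ ((M-q1)*A0 + (M-(1-q1))*A3)*((M-(1-q1))*A0 + (M-q1)*A3) := by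
    nlinarith [mul_nonneg (mul_nonneg (sub_nonneg.mpr hq1)
      (by linarith : (0:ℝ) ≤ M-(1-q1))) (sq_nonneg (A0-A3))]
  have hu : (0:ℝ) ≤ u^2 + w^2 := by positivity
  have hc : (0:ℝ) ≤ c1^2*x^2 + c3^2*y^2 := by positivity
  have hKA : (0:ℝ) ≤ (2*M-1)^2 * (A0*A3) := by positivity
  have hBB : (0:ℝ) ≤ B0*B3 := mul_nonneg hB0 hB3
  have h4 : (2*c1*x*u - 2*c3*y*w)^2 ≤
      4 * (B0*B3) * (((M-q1)*A0 + (M-(1-q1))*A3)*((M-(1-q1))*A0 + (M-q1)*A3)) := by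
    have s1 : 4 * (u^2+w^2) * (c1^2*x^2 + c3^2*y^2) ≤ 4 * (B0*B3) * (c1^2*x^2 + c3^2*y^2) := by
      linarith [mul_nonneg (by linarith : (0:ℝ) ≤ B0*B3 - (u^2+w^2)) hc]
    have s2 : 4 * (B0*B3) * (c1^2*x^2 + c3^2*y^2) ≤ 4 * (B0*B3) * ((2*M-1)^2 * (A0*A3)) := by
      linarith [mul_nonneg hBB (by linarith : (0:ℝ) ≤ (2*M-1)^2*(A0*A3) - (c1^2*x^2 + c3^2*y^2))]
    have s3 : 4 * (B0*B3) * ((2*M-1)^2 * (A0*A3)) ≤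
        4 * (B0*B3) * (((M-q1)*A0 + (M-(1-q1))*A3)*((M-(1-q1))*A0 + (M-q1)*A3)) := by
      linarith [mul_nonneg hBB (by linarith : (0:ℝ) ≤
        ((M-q1)*A0 + (M-(1-q1))*A3)*((M-(1-q1))*A0 + (M-q1)*A3) - (2*M-1)^2*(A0*A3))]
    linarith
  have h5 : (2*c1*x*u - 2*c3*y*w)^2 ≤
      (B0*((M-q1)*A0 + (M-(1-q1))*A3) + B3*((M-(1-q1))*A0 + (M-q1)*A3))^2 := by
    nlinarith [sq_nonneg (B0*((M-q1)*A0 + (M-(1-q1))*A3) - B3*((M-(1-q1))*A0 + (M-q1)*A3))]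
  have h6 : 2*c1*x*u - 2*c3*y*w ≤
      B0*((M-q1)*A0 + (M-(1-q1))*A3) + B3*((M-(1-q1))*A0 + (M-q1)*A3) := by
    nlinarith [h5, hS0]
  nlinarith [h6]

private lemma cvP_psd_facts (a : Matrix (Fin 2) (Fin 2) ℂ) (h : a.PosSemidef) :
    (a 0 0).im = 0 ∧ (a 1 1).im = 0 ∧ 0 ≤ (a 0 0).re ∧ 0 ≤ (a 1 1).re ∧
      a 1 0 = (starRingEnd ℂ) (a 0 1) ∧
      (a 0 1).re ^ 2 + (a 0 1).im ^ 2 ≤ (a 0 0).re * (a 1 1).re := by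
  have h00 : 0 ≤ a 0 0 := by
    have := h.dotProduct_mulVec_nonneg (Pi.single 0 1)
    simpa [dotProduct, Matrix.mulVec, Fin.sum_univ_two, Pi.single_apply] using this
  have h11 : 0 ≤ a 1 1 := by
    have := h.dotProduct_mulVec_nonneg (Pi.single 1 1)
    simpa [dotProduct, Matrix.mulVec, Fin.sum_univ_two, Pi.single_apply] using this
  have hherm : a 1 0 = (starRingEnd ℂ) (a 0 1) := by
    have := congrFun (congrFun h.1 1) 0
    simpa [Matrix.conjTranspose_apply] using this.symm
  have hdet : 0 ≤ a.det := by
    rw [h.1.det_eq_prod_eigenvalues]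
    have h2 : (0:ℝ) ≤ ∏ i, h.1.eigenvalues i :=
      Finset.prod_nonneg fun i _ => h.eigenvalues_nonneg i
    norm_cast
  rw [Complex.le_def] at h00 h11 hdet
  have hdet2 : a.det = a 0 0 * a 1 1 - a 0 1 * a 1 0 := by
    simp [Matrix.det_fin_two]
  rw [hdet2, hherm] at hdet
  obtain ⟨hd1, hd2⟩ := hdet
  refine ⟨h00.2.symm, h11.2.symm, h00.1, h11.1, hherm, ?_⟩
  simp [Complex.sub_re, Complex.mul_re, Complex.conj_re, Complex.conj_im,
    ← h00.2, ← h11.2] at hd1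
  nlinarith [hd1]

set_option maxHeartbeats 2000000 in
private lemma cvP_trace_formula (p : Fin 4 → ℝ) (N : Channel (Fin 2) (Fin 2))
    (hN : ∀ ρ : Matrix (Fin 2) (Fin 2) ℂ,
      N.map ρ = ∑ i, (p i : ℂ) • (pauliGate i * ρ * pauliGate i))
    (a b : Matrix (Fin 2) (Fin 2) ℂ) :
    ((a ⊗ₖ b) * choi N.map).trace =
      (p 0 : ℂ) * (a 0 0 * b 0 0 + a 0 1 * b 0 1 + a 1 0 * b 1 0 + a 1 1 * b 1 1)
      + (p 1 : ℂ) * (a 0 0 * b 1 1 + a 0 1 * b 1 0 + a 1 0 * b 0 1 + a 1 1 * b 0 0)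
      + (p 2 : ℂ) * (a 0 0 * b 0 0 - a 0 1 * b 0 1 - a 1 0 * b 1 0 + a 1 1 * b 1 1)
      + (p 3 : ℂ) * (a 0 0 * b 1 1 - a 0 1 * b 1 0 - a 1 0 * b 0 1 + a 1 1 * b 0 0) := by
  simp only [Matrix.trace, Matrix.diag, Matrix.mul_apply, choi, Matrix.of_apply, hN,
    Matrix.sum_apply, Matrix.smul_apply, Fintype.sum_prod_type, Fin.sum_univ_two,
    Fin.sum_univ_four, smul_eq_mul, pauliGate]
  simp [Matrix.mul_apply, Fin.sum_univ_two, Matrix.single, Matrix.one_apply,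
    kroneckerMap_apply]
  ring

private lemma cvP_term_bound (p : Fin 4 → ℝ) (hp1 : ∑ i, p i = 1)
    (M : ℝ) (hM : ∀ i j : Fin 4, i ≠ j → p i + p j ≤ M)
    (N : Channel (Fin 2) (Fin 2))
    (hN : ∀ ρ : Matrix (Fin 2) (Fin 2) ℂ,
      N.map ρ = ∑ i, (p i : ℂ) • (pauliGate i * ρ * pauliGate i))
    (a b : Matrix (Fin 2) (Fin 2) ℂ) (ha : a.PosSemidef) (hb : b.PosSemidef) :
    (((a ⊗ₖ b) * choi N.map).trace).re ≤ M * ((a.trace).re * (b.trace).re) := by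
  obtain ⟨ha1, ha2, ha3, ha4, ha5, ha6⟩ := cvP_psd_facts a ha
  obtain ⟨hb1, hb2, hb3, hb4, hb5, hb6⟩ := cvP_psd_facts b hb
  have hsum4 : p 0 + p 1 + p 2 + p 3 = 1 := by
    have := hp1; rwa [Fin.sum_univ_four] at this
  have hq1M : p 0 + p 2 ≤ M := hM 0 2 (by decide)
  have hq2M : p 1 + p 3 ≤ M := hM 1 3 (by decide)
  have h01 : p 0 + p 1 ≤ M := hM 0 1 (by decide)
  have h23 : p 2 + p 3 ≤ M := hM 2 3 (by decide)
  have h03 : p 0 + p 3 ≤ M := hM 0 3 (by decide)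
  have h12 : p 1 + p 2 ≤ M := hM 1 2 (by decide)
  have hc1 : (p 0 + p 1 - p 2 - p 3)^2 ≤ (2*M-1)^2 := by nlinarith
  have hc3 : (p 0 - p 1 - p 2 + p 3)^2 ≤ (2*M-1)^2 := by nlinarith
  have key := cvP_real_key M (p 0 + p 2) (p 1 + p 3) (p 0 + p 1 - p 2 - p 3)
    (p 0 - p 1 - p 2 + p 3) ((a 0 0).re) ((a 1 1).re) ((b 0 0).re) ((b 1 1).re)
    ((a 0 1).re) ((a 0 1).im) ((b 0 1).re) ((b 0 1).im)
    (by linarith) hq1M hq2M hc1 hc3 ha3 ha4 hb3 hb4 ha6 hb6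
  rw [cvP_trace_formula p N hN a b]
  have htra : (a.trace).re = (a 0 0).re + (a 1 1).re := by
    simp [Matrix.trace, Fin.sum_univ_two]
  have htrb : (b.trace).re = (b 0 0).re + (b 1 1).re := by
    simp [Matrix.trace, Fin.sum_univ_two]
  rw [htra, htrb]
  simp only [Complex.add_re, Complex.sub_re, Complex.mul_re, Complex.mul_im,
    Complex.ofReal_re, Complex.ofReal_im, ha5, hb5, Complex.conj_re, Complex.conj_im,
    ha1, ha2, hb1, hb2]
  ring_nf
  ring_nf at key
  linarith [key]

private lemma cvP_trace_im (a : Matrix (Fin 2) (Fin 2) ℂ) (h : a.PosSemidef) :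
    (a.trace).im = 0 ∧ 0 ≤ (a.trace).re := by
  obtain ⟨h1, h2, h3, h4, -, -⟩ := cvP_psd_facts a h
  constructor
  · simp [Matrix.trace, Fin.sum_univ_two, h1, h2]
  · simp only [Matrix.trace, Fin.sum_univ_two, Matrix.diag]
    simp [Complex.add_re]; linarith

private lemma cvP_pair_mem (p : Fin 4 → ℝ) (N : Channel (Fin 2) (Fin 2))
    (a1 b1 a2 b2 : Matrix (Fin 2) (Fin 2) ℂ)
    (h1 : a1ᴴ * a1 = a1) (h2 : b1ᴴ * b1 = b1) (h3 : a2ᴴ * a2 = a2) (h4 : b2ᴴ * b2 = b2)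
    (hpt : ptraceA (a1 ⊗ₖ b1 + a2 ⊗ₖ b2) = 1) (v : ℝ)
    (hv : v = (((a1 ⊗ₖ b1 + a2 ⊗ₖ b2) * choi N.map).trace).re) :
    v ∈ {r | ∃ Ω : Matrix ((Fin 2) × (Fin 2)) ((Fin 2) × (Fin 2)) ℂ,
      IsSep Ω ∧ ptraceA Ω = 1 ∧ r = ((Ω * choi N.map).trace).re} := by
  refine ⟨a1 ⊗ₖ b1 + a2 ⊗ₖ b2, ⟨2, ![a1, a2], ![b1, b2], ?_, ?_, ?_⟩, hpt, hv⟩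
  · intro i; fin_cases i
    · simpa using h1 ▸ Matrix.posSemidef_conjTranspose_mul_self a1
    · simpa using h3 ▸ Matrix.posSemidef_conjTranspose_mul_self a2
  · intro i; fin_cases i
    · simpa using h2 ▸ Matrix.posSemidef_conjTranspose_mul_self b1
    · simpa using h4 ▸ Matrix.posSemidef_conjTranspose_mul_self b2
  · simp [Fin.sum_univ_two]

set_option maxHeartbeats 3000000 in
private lemma cvP_mem01 (p : Fin 4 → ℝ) (N : Channel (Fin 2) (Fin 2))
    (hN : ∀ ρ : Matrix (Fin 2) (Fin 2) ℂ,
      N.map ρ = ∑ i, (p i : ℂ) • (pauliGate i * ρ * pauliGate i)) :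
    (2*(p 0 + p 1)) ∈ {r | ∃ Ω : Matrix ((Fin 2) × (Fin 2)) ((Fin 2) × (Fin 2)) ℂ,
      IsSep Ω ∧ ptraceA Ω = 1 ∧ r = ((Ω * choi N.map).trace).re} := by
  apply cvP_pair_mem p N
    !![((1:ℝ)/2 : ℂ), ((1:ℝ)/2 : ℂ); ((1:ℝ)/2 : ℂ), ((1:ℝ)/2 : ℂ)]
    !![((1:ℝ)/2 : ℂ), ((1:ℝ)/2 : ℂ); ((1:ℝ)/2 : ℂ), ((1:ℝ)/2 : ℂ)]
    !![((1:ℝ)/2 : ℂ), -((1:ℝ)/2 : ℂ); -((1:ℝ)/2 : ℂ), ((1:ℝ)/2 : ℂ)]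
    !![((1:ℝ)/2 : ℂ), -((1:ℝ)/2 : ℂ); -((1:ℝ)/2 : ℂ), ((1:ℝ)/2 : ℂ)]
  · ext i j; fin_cases i <;> fin_cases j <;>
      simp [Matrix.mul_apply, Fin.sum_univ_two, Matrix.conjTranspose_apply, Complex.ext_iff] <;>
      norm_num
  · ext i j; fin_cases i <;> fin_cases j <;>
      simp [Matrix.mul_apply, Fin.sum_univ_two, Matrix.conjTranspose_apply, Complex.ext_iff] <;>
      norm_num
  · ext i j; fin_cases i <;> fin_cases j <;>
      simp [Matrix.mul_apply, Fin.sum_univ_two, Matrix.conjTranspose_apply, Complex.ext_iff] <;>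
      norm_num
  · ext i j; fin_cases i <;> fin_cases j <;>
      simp [Matrix.mul_apply, Fin.sum_univ_two, Matrix.conjTranspose_apply, Complex.ext_iff] <;>
      norm_num
  · ext k l; fin_cases k <;> fin_cases l <;>
      simp [ptraceA, Fin.sum_univ_two, Matrix.kroneckerMap_apply, Matrix.add_apply,
        Matrix.one_apply] <;> norm_num
  · rw [add_mul, Matrix.trace_add, Complex.add_re,
      cvP_trace_formula p N hN _ _, cvP_trace_formula p N hN _ _]
    simp only [Matrix.cons_val', Matrix.cons_val_zero, Matrix.cons_val_one, Matrix.head_cons,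
      Matrix.empty_val', Matrix.cons_val_fin_one, Matrix.head_fin_const, Matrix.of_apply]
    simp only [Complex.add_re, Complex.sub_re, Complex.mul_re, Complex.mul_im,
      Complex.add_im, Complex.sub_im, Complex.I_re, Complex.I_im, Complex.ofReal_re,
      Complex.ofReal_im, Complex.neg_re, Complex.neg_im]
    ring_nf
    norm_num [Complex.div_re, Complex.div_im, Complex.normSq]
    try ring

set_option maxHeartbeats 3000000 in
private lemma cvP_mem02 (p : Fin 4 → ℝ) (N : Channel (Fin 2) (Fin 2))
    (hN : ∀ ρ : Matrix (Fin 2) (Fin 2) ℂ,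
      N.map ρ = ∑ i, (p i : ℂ) • (pauliGate i * ρ * pauliGate i)) :
    (2*(p 0 + p 2)) ∈ {r | ∃ Ω : Matrix ((Fin 2) × (Fin 2)) ((Fin 2) × (Fin 2)) ℂ,
      IsSep Ω ∧ ptraceA Ω = 1 ∧ r = ((Ω * choi N.map).trace).re} := by
  apply cvP_pair_mem p N
    !![(1 : ℂ), 0; 0, 0] !![(1 : ℂ), 0; 0, 0] !![(0 : ℂ), 0; 0, 1] !![(0 : ℂ), 0; 0, 1]
  · ext i j; fin_cases i <;> fin_cases j <;>
      simp [Matrix.mul_apply, Fin.sum_univ_two, Matrix.conjTranspose_apply, Complex.ext_iff] <;>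
      norm_num
  · ext i j; fin_cases i <;> fin_cases j <;>
      simp [Matrix.mul_apply, Fin.sum_univ_two, Matrix.conjTranspose_apply, Complex.ext_iff] <;>
      norm_num
  · ext i j; fin_cases i <;> fin_cases j <;>
      simp [Matrix.mul_apply, Fin.sum_univ_two, Matrix.conjTranspose_apply, Complex.ext_iff] <;>
      norm_num
  · ext i j; fin_cases i <;> fin_cases j <;>
      simp [Matrix.mul_apply, Fin.sum_univ_two, Matrix.conjTranspose_apply, Complex.ext_iff] <;>
      norm_num
  · ext k l; fin_cases k <;> fin_cases l <;>
      simp [ptraceA, Fin.sum_univ_two, Matrix.kroneckerMap_apply, Matrix.add_apply,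
        Matrix.one_apply] <;> norm_num
  · rw [add_mul, Matrix.trace_add, Complex.add_re,
      cvP_trace_formula p N hN _ _, cvP_trace_formula p N hN _ _]
    simp only [Matrix.cons_val', Matrix.cons_val_zero, Matrix.cons_val_one, Matrix.head_cons,
      Matrix.empty_val', Matrix.cons_val_fin_one, Matrix.head_fin_const, Matrix.of_apply]
    simp only [Complex.add_re, Complex.sub_re, Complex.mul_re, Complex.mul_im,
      Complex.add_im, Complex.sub_im, Complex.I_re, Complex.I_im, Complex.ofReal_re,
      Complex.ofReal_im, Complex.neg_re, Complex.neg_im]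
    ring_nf
    norm_num [Complex.div_re, Complex.div_im, Complex.normSq]
    try ring

set_option maxHeartbeats 3000000 in
private lemma cvP_mem03 (p : Fin 4 → ℝ) (N : Channel (Fin 2) (Fin 2))
    (hN : ∀ ρ : Matrix (Fin 2) (Fin 2) ℂ,
      N.map ρ = ∑ i, (p i : ℂ) • (pauliGate i * ρ * pauliGate i)) :
    (2*(p 0 + p 3)) ∈ {r | ∃ Ω : Matrix ((Fin 2) × (Fin 2)) ((Fin 2) × (Fin 2)) ℂ,
      IsSep Ω ∧ ptraceA Ω = 1 ∧ r = ((Ω * choi N.map).trace).re} := by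
  apply cvP_pair_mem p N
    !![((1:ℝ)/2 : ℂ), ((1:ℝ)/2 : ℂ)*Complex.I; -((1:ℝ)/2 : ℂ)*Complex.I, ((1:ℝ)/2 : ℂ)]
    !![((1:ℝ)/2 : ℂ), -((1:ℝ)/2 : ℂ)*Complex.I; ((1:ℝ)/2 : ℂ)*Complex.I, ((1:ℝ)/2 : ℂ)]
    !![((1:ℝ)/2 : ℂ), -((1:ℝ)/2 : ℂ)*Complex.I; ((1:ℝ)/2 : ℂ)*Complex.I, ((1:ℝ)/2 : ℂ)]
    !![((1:ℝ)/2 : ℂ), ((1:ℝ)/2 : ℂ)*Complex.I; -((1:ℝ)/2 : ℂ)*Complex.I, ((1:ℝ)/2 : ℂ)]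
  · ext i j; fin_cases i <;> fin_cases j <;>
      simp [Matrix.mul_apply, Fin.sum_univ_two, Matrix.conjTranspose_apply, Complex.ext_iff] <;>
      norm_num
  · ext i j; fin_cases i <;> fin_cases j <;>
      simp [Matrix.mul_apply, Fin.sum_univ_two, Matrix.conjTranspose_apply, Complex.ext_iff] <;>
      norm_num
  · ext i j; fin_cases i <;> fin_cases j <;>
      simp [Matrix.mul_apply, Fin.sum_univ_two, Matrix.conjTranspose_apply, Complex.ext_iff] <;>
      norm_num
  · ext i j; fin_cases i <;> fin_cases j <;>
      simp [Matrix.mul_apply, Fin.sum_univ_two, Matrix.conjTranspose_apply, Complex.ext_iff] <;>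
      norm_num
  · ext k l; fin_cases k <;> fin_cases l <;>
      simp [ptraceA, Fin.sum_univ_two, Matrix.kroneckerMap_apply, Matrix.add_apply,
        Matrix.one_apply] <;> norm_num
  · rw [add_mul, Matrix.trace_add, Complex.add_re,
      cvP_trace_formula p N hN _ _, cvP_trace_formula p N hN _ _]
    simp only [Matrix.cons_val', Matrix.cons_val_zero, Matrix.cons_val_one, Matrix.head_cons,
      Matrix.empty_val', Matrix.cons_val_fin_one, Matrix.head_fin_const, Matrix.of_apply]
    simp only [Complex.add_re, Complex.sub_re, Complex.mul_re, Complex.mul_im,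
      Complex.add_im, Complex.sub_im, Complex.I_re, Complex.I_im, Complex.ofReal_re,
      Complex.ofReal_im, Complex.neg_re, Complex.neg_im]
    ring_nf
    norm_num [Complex.div_re, Complex.div_im, Complex.normSq]
    try ring

set_option maxHeartbeats 3000000 in
private lemma cvP_mem12 (p : Fin 4 → ℝ) (N : Channel (Fin 2) (Fin 2))
    (hN : ∀ ρ : Matrix (Fin 2) (Fin 2) ℂ,
      N.map ρ = ∑ i, (p i : ℂ) • (pauliGate i * ρ * pauliGate i)) :
    (2*(p 1 + p 2)) ∈ {r | ∃ Ω : Matrix ((Fin 2) × (Fin 2)) ((Fin 2) × (Fin 2)) ℂ,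
      IsSep Ω ∧ ptraceA Ω = 1 ∧ r = ((Ω * choi N.map).trace).re} := by
  apply cvP_pair_mem p N
    !![((1:ℝ)/2 : ℂ), -((1:ℝ)/2 : ℂ)*Complex.I; ((1:ℝ)/2 : ℂ)*Complex.I, ((1:ℝ)/2 : ℂ)]
    !![((1:ℝ)/2 : ℂ), -((1:ℝ)/2 : ℂ)*Complex.I; ((1:ℝ)/2 : ℂ)*Complex.I, ((1:ℝ)/2 : ℂ)]
    !![((1:ℝ)/2 : ℂ), ((1:ℝ)/2 : ℂ)*Complex.I; -((1:ℝ)/2 : ℂ)*Complex.I, ((1:ℝ)/2 : ℂ)]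
    !![((1:ℝ)/2 : ℂ), ((1:ℝ)/2 : ℂ)*Complex.I; -((1:ℝ)/2 : ℂ)*Complex.I, ((1:ℝ)/2 : ℂ)]
  · ext i j; fin_cases i <;> fin_cases j <;>
      simp [Matrix.mul_apply, Fin.sum_univ_two, Matrix.conjTranspose_apply, Complex.ext_iff] <;>
      norm_num
  · ext i j; fin_cases i <;> fin_cases j <;>
      simp [Matrix.mul_apply, Fin.sum_univ_two, Matrix.conjTranspose_apply, Complex.ext_iff] <;>
      norm_num
  · ext i j; fin_cases i <;> fin_cases j <;>
      simp [Matrix.mul_apply, Fin.sum_univ_two, Matrix.conjTranspose_apply, Complex.ext_iff] <;>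
      norm_num
  · ext i j; fin_cases i <;> fin_cases j <;>
      simp [Matrix.mul_apply, Fin.sum_univ_two, Matrix.conjTranspose_apply, Complex.ext_iff] <;>
      norm_num
  · ext k l; fin_cases k <;> fin_cases l <;>
      simp [ptraceA, Fin.sum_univ_two, Matrix.kroneckerMap_apply, Matrix.add_apply,
        Matrix.one_apply] <;> norm_num
  · rw [add_mul, Matrix.trace_add, Complex.add_re,
      cvP_trace_formula p N hN _ _, cvP_trace_formula p N hN _ _]
    simp only [Matrix.cons_val', Matrix.cons_val_zero, Matrix.cons_val_one, Matrix.head_cons,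
      Matrix.empty_val', Matrix.cons_val_fin_one, Matrix.head_fin_const, Matrix.of_apply]
    simp only [Complex.add_re, Complex.sub_re, Complex.mul_re, Complex.mul_im,
      Complex.add_im, Complex.sub_im, Complex.I_re, Complex.I_im, Complex.ofReal_re,
      Complex.ofReal_im, Complex.neg_re, Complex.neg_im]
    ring_nf
    norm_num [Complex.div_re, Complex.div_im, Complex.normSq]
    try ring

set_option maxHeartbeats 3000000 in
private lemma cvP_mem13 (p : Fin 4 → ℝ) (N : Channel (Fin 2) (Fin 2))
    (hN : ∀ ρ : Matrix (Fin 2) (Fin 2) ℂ,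
      N.map ρ = ∑ i, (p i : ℂ) • (pauliGate i * ρ * pauliGate i)) :
    (2*(p 1 + p 3)) ∈ {r | ∃ Ω : Matrix ((Fin 2) × (Fin 2)) ((Fin 2) × (Fin 2)) ℂ,
      IsSep Ω ∧ ptraceA Ω = 1 ∧ r = ((Ω * choi N.map).trace).re} := by
  apply cvP_pair_mem p N
    !![(1 : ℂ), 0; 0, 0] !![(0 : ℂ), 0; 0, 1] !![(0 : ℂ), 0; 0, 1] !![(1 : ℂ), 0; 0, 0]
  · ext i j; fin_cases i <;> fin_cases j <;>
      simp [Matrix.mul_apply, Fin.sum_univ_two, Matrix.conjTranspose_apply, Complex.ext_iff] <;>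
      norm_num
  · ext i j; fin_cases i <;> fin_cases j <;>
      simp [Matrix.mul_apply, Fin.sum_univ_two, Matrix.conjTranspose_apply, Complex.ext_iff] <;>
      norm_num
  · ext i j; fin_cases i <;> fin_cases j <;>
      simp [Matrix.mul_apply, Fin.sum_univ_two, Matrix.conjTranspose_apply, Complex.ext_iff] <;>
      norm_num
  · ext i j; fin_cases i <;> fin_cases j <;>
      simp [Matrix.mul_apply, Fin.sum_univ_two, Matrix.conjTranspose_apply, Complex.ext_iff] <;>
      norm_num
  · ext k l; fin_cases k <;> fin_cases l <;>
      simp [ptraceA, Fin.sum_univ_two, Matrix.kroneckerMap_apply, Matrix.add_apply,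
        Matrix.one_apply] <;> norm_num
  · rw [add_mul, Matrix.trace_add, Complex.add_re,
      cvP_trace_formula p N hN _ _, cvP_trace_formula p N hN _ _]
    simp only [Matrix.cons_val', Matrix.cons_val_zero, Matrix.cons_val_one, Matrix.head_cons,
      Matrix.empty_val', Matrix.cons_val_fin_one, Matrix.head_fin_const, Matrix.of_apply]
    simp only [Complex.add_re, Complex.sub_re, Complex.mul_re, Complex.mul_im,
      Complex.add_im, Complex.sub_im, Complex.I_re, Complex.I_im, Complex.ofReal_re,
      Complex.ofReal_im, Complex.neg_re, Complex.neg_im]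
    ring_nf
    norm_num [Complex.div_re, Complex.div_im, Complex.normSq]
    try ring

set_option maxHeartbeats 3000000 in
private lemma cvP_mem23 (p : Fin 4 → ℝ) (N : Channel (Fin 2) (Fin 2))
    (hN : ∀ ρ : Matrix (Fin 2) (Fin 2) ℂ,
      N.map ρ = ∑ i, (p i : ℂ) • (pauliGate i * ρ * pauliGate i)) :
    (2*(p 2 + p 3)) ∈ {r | ∃ Ω : Matrix ((Fin 2) × (Fin 2)) ((Fin 2) × (Fin 2)) ℂ,
      IsSep Ω ∧ ptraceA Ω = 1 ∧ r = ((Ω * choi N.map).trace).re} := by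
  apply cvP_pair_mem p N
    !![((1:ℝ)/2 : ℂ), ((1:ℝ)/2 : ℂ); ((1:ℝ)/2 : ℂ), ((1:ℝ)/2 : ℂ)]
    !![((1:ℝ)/2 : ℂ), -((1:ℝ)/2 : ℂ); -((1:ℝ)/2 : ℂ), ((1:ℝ)/2 : ℂ)]
    !![((1:ℝ)/2 : ℂ), -((1:ℝ)/2 : ℂ); -((1:ℝ)/2 : ℂ), ((1:ℝ)/2 : ℂ)]
    !![((1:ℝ)/2 : ℂ), ((1:ℝ)/2 : ℂ); ((1:ℝ)/2 : ℂ), ((1:ℝ)/2 : ℂ)]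
  · ext i j; fin_cases i <;> fin_cases j <;>
      simp [Matrix.mul_apply, Fin.sum_univ_two, Matrix.conjTranspose_apply, Complex.ext_iff] <;>
      norm_num
  · ext i j; fin_cases i <;> fin_cases j <;>
      simp [Matrix.mul_apply, Fin.sum_univ_two, Matrix.conjTranspose_apply, Complex.ext_iff] <;>
      norm_num
  · ext i j; fin_cases i <;> fin_cases j <;>
      simp [Matrix.mul_apply, Fin.sum_univ_two, Matrix.conjTranspose_apply, Complex.ext_iff] <;>
      norm_num
  · ext i j; fin_cases i <;> fin_cases j <;>
      simp [Matrix.mul_apply, Fin.sum_univ_two, Matrix.conjTranspose_apply, Complex.ext_iff] <;>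
      norm_num
  · ext k l; fin_cases k <;> fin_cases l <;>
      simp [ptraceA, Fin.sum_univ_two, Matrix.kroneckerMap_apply, Matrix.add_apply,
        Matrix.one_apply] <;> norm_num
  · rw [add_mul, Matrix.trace_add, Complex.add_re,
      cvP_trace_formula p N hN _ _, cvP_trace_formula p N hN _ _]
    simp only [Matrix.cons_val', Matrix.cons_val_zero, Matrix.cons_val_one, Matrix.head_cons,
      Matrix.empty_val', Matrix.cons_val_fin_one, Matrix.head_fin_const, Matrix.of_apply]
    simp only [Complex.add_re, Complex.sub_re, Complex.mul_re, Complex.mul_im,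
      Complex.add_im, Complex.sub_im, Complex.I_re, Complex.I_im, Complex.ofReal_re,
      Complex.ofReal_im, Complex.neg_re, Complex.neg_im]
    ring_nf
    norm_num [Complex.div_re, Complex.div_im, Complex.normSq]
    try ring

private lemma cvP_achieve (p : Fin 4 → ℝ) (N : Channel (Fin 2) (Fin 2))
    (hN : ∀ ρ : Matrix (Fin 2) (Fin 2) ℂ,
      N.map ρ = ∑ i, (p i : ℂ) • (pauliGate i * ρ * pauliGate i))
    (i j : Fin 4) (hij : i ≠ j) :
    (2*(p i + p j)) ∈ {r | ∃ Ω : Matrix ((Fin 2) × (Fin 2)) ((Fin 2) × (Fin 2)) ℂ,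
      IsSep Ω ∧ ptraceA Ω = 1 ∧ r = ((Ω * choi N.map).trace).re} := by
  fin_cases i <;> fin_cases j <;> simp only [Fin.isValue]
  · exact absurd rfl hij
  · exact cvP_mem01 p N hN
  · exact cvP_mem02 p N hN
  · exact cvP_mem03 p N hN
  · have h := cvP_mem01 p N hN
    rw [show p 0 + p 1 = p 1 + p 0 by ring] at h; exact h
  · exact absurd rfl hij
  · exact cvP_mem12 p N hN
  · exact cvP_mem13 p N hN
  · have h := cvP_mem02 p N hN
    rw [show p 0 + p 2 = p 2 + p 0 by ring] at h; exact h
  · have h := cvP_mem12 p N hN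
    rw [show p 1 + p 2 = p 2 + p 1 by ring] at h; exact h
  · exact absurd rfl hij
  · exact cvP_mem23 p N hN
  · have h := cvP_mem03 p N hN
    rw [show p 0 + p 3 = p 3 + p 0 by ring] at h; exact h
  · have h := cvP_mem13 p N hN
    rw [show p 1 + p 3 = p 3 + p 1 by ring] at h; exact h
  · have h := cvP_mem23 p N hN
    rw [show p 2 + p 3 = p 3 + p 2 by ring] at h; exact h
  · exact absurd rfl hij

/-- The communication value of a Pauli channel
`N(ρ) = p₀ρ + p₁XρX + p₂ZρZ + p₃YρY` is twice the sum of its two largest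
probabilities. -/
theorem cv_pauli_channel (p : Fin 4 → ℝ) (hp0 : ∀ i, 0 ≤ p i) (hp1 : ∑ i, p i = 1)
    (N : Channel (Fin 2) (Fin 2))
    (hN : ∀ ρ : Matrix (Fin 2) (Fin 2) ℂ,
      N.map ρ = ∑ i, (p i : ℂ) • (pauliGate i * ρ * pauliGate i)) :
    cv N = 2 * sSup {s | ∃ i j : Fin 4, i ≠ j ∧ s = p i + p j} := by
  classical
  have hfin : {s | ∃ i j : Fin 4, i ≠ j ∧ s = p i + p j}.Finite := by
    apply Set.Finite.subset (Set.finite_range fun ij : Fin 4 × Fin 4 => p ij.1 + p ij.2)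
    rintro s ⟨i, j, -, rfl⟩; exact ⟨(i, j), rfl⟩
  have hne : {s | ∃ i j : Fin 4, i ≠ j ∧ s = p i + p j}.Nonempty :=
    ⟨p 0 + p 1, 0, 1, by decide, rfl⟩
  obtain ⟨i0, j0, hij0, hM0⟩ := hne.csSup_mem hfin
  set M := sSup {s | ∃ i j : Fin 4, i ≠ j ∧ s = p i + p j} with hMdef
  have hub : ∀ i j : Fin 4, i ≠ j → p i + p j ≤ M := fun i j h =>
    le_csSup hfin.bddAbove ⟨i, j, h, rfl⟩
  -- the feasible set of the conic program
  set S : Set ℝ := {r | ∃ Ω : Matrix ((Fin 2) × (Fin 2)) ((Fin 2) × (Fin 2)) ℂ,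
      IsSep Ω ∧ ptraceA Ω = 1 ∧ r = ((Ω * choi N.map).trace).re} with hSdef
  have hmem : (2 * M) ∈ S := by
    rw [hM0]; exact cvP_achieve p N hN i0 j0 hij0
  have hupper : ∀ r ∈ S, r ≤ 2 * M := by
    rintro r ⟨Ω, ⟨n, a, b, hpa, hpb, rfl⟩, hpt, rfl⟩
    have hexp : ((∑ t, a t ⊗ₖ b t) * choi N.map).trace
        = ∑ t, ((a t ⊗ₖ b t) * choi N.map).trace := by
      rw [Finset.sum_mul, Matrix.trace_sum]
    have htraceC : ∑ t, (a t).trace * (b t).trace = 2 := by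
      have e : ∀ k : Fin 2, ptraceA (∑ t, a t ⊗ₖ b t) k k = ∑ t, (a t).trace * b t k k := by
        intro k
        simp only [ptraceA, Matrix.of_apply, Matrix.sum_apply, Matrix.kroneckerMap_apply,
          Fin.sum_univ_two, Matrix.trace, Matrix.diag]
        rw [← Finset.sum_add_distrib]
        exact Finset.sum_congr rfl fun t _ => by ring
      have h0 : ptraceA (∑ t, a t ⊗ₖ b t) 0 0 = 1 := by rw [hpt]; simp
      have h1 : ptraceA (∑ t, a t ⊗ₖ b t) 1 1 = 1 := by rw [hpt]; simp
      calc ∑ t, (a t).trace * (b t).trace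
          = ∑ t, (a t).trace * b t 0 0 + ∑ t, (a t).trace * b t 1 1 := by
            rw [← Finset.sum_add_distrib]
            refine Finset.sum_congr rfl fun t _ => ?_
            simp only [Matrix.trace, Matrix.diag, Fin.sum_univ_two]
            ring
        _ = 1 + 1 := by rw [← e 0, ← e 1, h0, h1]
        _ = 2 := by norm_num
    have hsum2 : ∑ t, ((a t).trace.re * (b t).trace.re) = 2 := by
      have step : ∑ t, ((a t).trace.re * (b t).trace.re)
          = (∑ t, (a t).trace * (b t).trace).re := by
        rw [Complex.re_sum]
        refine Finset.sum_congr rfl fun t _ => ?_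
        rw [Complex.mul_re, (cvP_trace_im (a t) (hpa t)).1]
        ring
      rw [step, htraceC]
      norm_num
    rw [hexp, Complex.re_sum]
    calc ∑ t, (((a t ⊗ₖ b t) * choi N.map).trace).re
        ≤ ∑ t, M * (((a t).trace).re * ((b t).trace).re) :=
          Finset.sum_le_sum fun t _ => cvP_term_bound p hp1 M hub N hN (a t) (b t)
            (hpa t) (hpb t)
      _ = M * ∑ t, (((a t).trace).re * ((b t).trace).re) := by rw [Finset.mul_sum]
      _ = 2 * M := by rw [hsum2]; ring
  have hbdd : BddAbove S := ⟨2 * M, fun r hr => hupper r hr⟩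
  rw [cv]
  exact le_antisymm (csSup_le ⟨2 * M, hmem⟩ hupper) (le_csSup hbdd hmem)
end

section
/- For the Werner-Holevo channel W_{d,λ}, the communication value is cv(W_{d,λ}) = d(d+1−2λ)/(d²−1) when λ ≤ (1+d)/(2d), and cv(W_{d,λ}) = 2dλ/(1+d) when λ > (1+d)/(2d). -/
open scoped BigOperators Kronecker ComplexOrder
open Matrix

section AuxWH
open Matrix

private lemma wh_conj_mul_self (z : ℂ) : star z * z = ((‖z‖ : ℝ) : ℂ) ^ 2 := by
  rw [mul_comm]; exact Complex.mul_conj' z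

private lemma wh_trace_conj_self {ι : Type*} [Fintype ι] [DecidableEq ι] (c : Matrix ι ι ℂ) :
    (cᴴ * c).trace = ((∑ i, ∑ k, ‖c i k‖ ^ 2 : ℝ) : ℂ) := by
  simp only [Matrix.trace, Matrix.diag, Matrix.mul_apply, Matrix.conjTranspose_apply]
  push_cast
  rw [Finset.sum_comm]
  refine Finset.sum_congr rfl fun i _ => Finset.sum_congr rfl fun k _ => ?_
  exact wh_conj_mul_self (c i k)

private lemma wh_psd_trace {ι : Type*} [Fintype ι] [DecidableEq ι] {A : Matrix ι ι ℂ}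
    (hA : A.PosSemidef) : A.trace = ((A.trace.re : ℝ) : ℂ) ∧ 0 ≤ A.trace.re := by
  obtain ⟨c, rfl⟩ : ∃ c : Matrix ι ι ℂ, A = cᴴ * c := by
    open scoped MatrixOrder in exact CStarAlgebra.nonneg_iff_eq_star_mul_self.mp hA.nonneg
  rw [wh_trace_conj_self]
  constructor
  · norm_cast
  · rw [Complex.ofReal_re]; positivity

private lemma wh_psd_trace_mul {ι : Type*} [Fintype ι] [DecidableEq ι] {A B : Matrix ι ι ℂ}
    (hA : A.PosSemidef) (hB : B.PosSemidef) :
    ∃ u : ℝ, 0 ≤ u ∧ u ≤ A.trace.re * B.trace.re ∧ (A * B).trace = ((u : ℝ) : ℂ) := by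
  obtain ⟨c, rfl⟩ : ∃ c : Matrix ι ι ℂ, A = cᴴ * c := by
    open scoped MatrixOrder in exact CStarAlgebra.nonneg_iff_eq_star_mul_self.mp hA.nonneg
  obtain ⟨m, rfl⟩ : ∃ m : Matrix ι ι ℂ, B = mᴴ * m := by
    open scoped MatrixOrder in exact CStarAlgebra.nonneg_iff_eq_star_mul_self.mp hB.nonneg
  set D : Matrix ι ι ℂ := m * cᴴ with hD
  have hDconj : Dᴴ = c * mᴴ := by
    rw [hD, Matrix.conjTranspose_mul, Matrix.conjTranspose_conjTranspose]
  have htr : (cᴴ * c * (mᴴ * m)).trace = (Dᴴ * D).trace := by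
    rw [hDconj, hD]
    rw [show cᴴ * c * (mᴴ * m) = cᴴ * (c * mᴴ * m) by simp [Matrix.mul_assoc],
      Matrix.trace_mul_comm, Matrix.mul_assoc]
  refine ⟨∑ i, ∑ j, ‖D i j‖ ^ 2, by positivity, ?_, by rw [htr, wh_trace_conj_self]⟩
  rw [wh_trace_conj_self, wh_trace_conj_self, Complex.ofReal_re, Complex.ofReal_re]
  have key : ∀ i j, ‖D i j‖ ^ 2 ≤ (∑ k, ‖m i k‖ ^ 2) * (∑ k, ‖c j k‖ ^ 2) := by
    intro i j
    have h1 : ‖D i j‖ ≤ ∑ k, ‖m i k‖ * ‖c j k‖ := by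
      rw [hD, Matrix.mul_apply]
      refine (norm_sum_le _ _).trans (le_of_eq (Finset.sum_congr rfl fun k _ => ?_))
      rw [norm_mul, Matrix.conjTranspose_apply, norm_star]
    calc ‖D i j‖ ^ 2 ≤ (∑ k, ‖m i k‖ * ‖c j k‖) ^ 2 :=
          pow_le_pow_left₀ (norm_nonneg _) h1 2
      _ ≤ (∑ k, ‖m i k‖ ^ 2) * (∑ k, ‖c j k‖ ^ 2) :=
          Finset.sum_mul_sq_le_sq_mul_sq _ _ _
  calc ∑ i, ∑ j, ‖D i j‖ ^ 2
      ≤ ∑ i, ∑ j, (∑ k, ‖m i k‖ ^ 2) * (∑ k, ‖c j k‖ ^ 2) := by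
        refine Finset.sum_le_sum fun i _ => Finset.sum_le_sum fun j _ => key i j
    _ = (∑ i, ∑ k, ‖m i k‖ ^ 2) * (∑ j, ∑ k, ‖c j k‖ ^ 2) := by
        rw [← Finset.sum_mul_sum]
    _ = (∑ i, ∑ k, ‖c i k‖ ^ 2) * (∑ i, ∑ k, ‖m i k‖ ^ 2) := by ring

private lemma wh_traceJ {ι : Type*} [Fintype ι] [DecidableEq ι] (A B : ℂ)
    (J Ω : Matrix (ι × ι) (ι × ι) ℂ)
    (hJ : ∀ p q, J p q = (A + B) * (if q = p then 1 else 0)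
      + (A - B) * (if q = (p.2, p.1) then 1 else 0)) :
    (Ω * J).trace = (A + B) * Ω.trace + (A - B) * ∑ p : ι × ι, Ω p (p.2, p.1) := by
  have h1 : (Ω * J).trace = ∑ q : ι × ι, ∑ p : ι × ι, Ω p q * J q p := by
    rw [Finset.sum_comm]
    simp [Matrix.trace, Matrix.diag, Matrix.mul_apply]
  rw [h1]
  have h2 : ∀ q : ι × ι, ∑ p : ι × ι, Ω p q * J q p
      = (A + B) * Ω q q + (A - B) * Ω (q.2, q.1) q := by
    intro q
    simp_rw [hJ q, mul_add, mul_ite, mul_one, mul_zero, Finset.sum_add_distrib]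
    rw [Finset.sum_ite_eq' Finset.univ q (fun p => Ω p q * (A + B)),
        Finset.sum_ite_eq' Finset.univ ((q.2, q.1) : ι × ι) (fun p => Ω p q * (A - B))]
    simp [mul_comm]
  simp_rw [h2, Finset.sum_add_distrib, ← Finset.mul_sum]
  congr 1
  rw [mul_comm (A - B)]
  rw [show ∑ q : ι × ι, Ω (q.2, q.1) q = ∑ p : ι × ι, Ω p (p.2, p.1) from
    Fintype.sum_equiv (Equiv.prodComm ι ι) _ _ (fun q => rfl)]
  ring

private lemma wh_swapsum_kron {ι : Type*} [Fintype ι] (a b : Matrix ι ι ℂ) :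
    ∑ p : ι × ι, (a ⊗ₖ b) p (p.2, p.1) = (a * b).trace := by
  rw [Fintype.sum_prod_type]
  simp [Matrix.trace, Matrix.diag, Matrix.mul_apply, Matrix.kroneckerMap_apply]

private lemma wh_trace_ptraceA {ιA ιB : Type*} [Fintype ιA] [Fintype ιB]
    (Ω : Matrix (ιA × ιB) (ιA × ιB) ℂ) : (ptraceA Ω).trace = Ω.trace := by
  rw [Matrix.trace, Matrix.trace]
  simp only [Matrix.diag, ptraceA, Matrix.of_apply]
  rw [Fintype.sum_prod_type, Finset.sum_comm]

private lemma wh_psd_E {ι : Type*} [Fintype ι] [DecidableEq ι] (i : ι) :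
    (Matrix.single i i (1 : ℂ)).PosSemidef := by
  have h : Matrix.single i i (1 : ℂ)
      = (Matrix.single i i (1 : ℂ))ᴴ * Matrix.single i i (1 : ℂ) := by
    have hH : (Matrix.single i i (1 : ℂ))ᴴ = Matrix.single i i (1 : ℂ) := by
      ext p q
      simp [Matrix.conjTranspose_apply, Matrix.single, and_comm]
    rw [hH, Matrix.single_mul_single_same, mul_one]
  rw [h]
  exact Matrix.posSemidef_conjTranspose_mul_self _

private lemma wh_sum_ite_diag {ι : Type*} [Fintype ι] [DecidableEq ι] (k l : ι) :
    (∑ t : ι, if t = k ∧ t = l then (1:ℂ) else 0) = if k = l then 1 else 0 := by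
  by_cases hkl : k = l
  · subst hkl
    simp [Finset.sum_ite_eq]
  · rw [if_neg hkl]
    apply Finset.sum_eq_zero
    intro t _
    rw [if_neg]
    rintro ⟨rfl, rfl⟩
    exact hkl rfl

private lemma wh_ptraceA_sumE {ι : Type*} [Fintype ι] [DecidableEq ι] (σ : Equiv.Perm ι) :
    ptraceA (∑ s : ι, Matrix.single s s (1 : ℂ) ⊗ₖ
      Matrix.single (σ s) (σ s) (1 : ℂ)) = 1 := by
  ext k l
  simp only [ptraceA, Matrix.of_apply, Matrix.sum_apply, Matrix.kroneckerMap_apply,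
    Matrix.single, Matrix.one_apply]
  rw [Finset.sum_comm]
  have h1 : ∀ s : ι, ∑ i : ι, (if s = i ∧ s = i then (1:ℂ) else 0) *
      (if σ s = k ∧ σ s = l then (1:ℂ) else 0) = if σ s = k ∧ σ s = l then 1 else 0 := by
    intro s
    simp [and_self, ite_mul, one_mul, zero_mul, Finset.sum_ite_eq]
  simp_rw [h1]
  rw [Fintype.sum_equiv σ _ (fun t => if t = k ∧ t = l then (1:ℂ) else 0) (fun x => rfl)]
  exact wh_sum_ite_diag k l

private lemma wh_choi_apply (d : ℕ) (lam : ℝ)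
    (Φ : Matrix (Fin d) (Fin d) ℂ →ₗ[ℂ] Matrix (Fin d) (Fin d) ℂ)
    (hN : ∀ X : Matrix (Fin d) (Fin d) ℂ,
      Φ X = ((lam : ℂ) / ((d : ℂ) + 1)) • (X.trace • (1 : Matrix (Fin d) (Fin d) ℂ) + Xᵀ)
        + (((1 - lam : ℝ) : ℂ) / ((d : ℂ) - 1)) •
            (X.trace • (1 : Matrix (Fin d) (Fin d) ℂ) - Xᵀ))
    (p q : Fin d × Fin d) :
    choi Φ p q =
      ((lam : ℂ) / ((d : ℂ) + 1) + ((1 - lam : ℝ) : ℂ) / ((d : ℂ) - 1)) * (if q = p then 1 else 0)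
      + ((lam : ℂ) / ((d : ℂ) + 1) - ((1 - lam : ℝ) : ℂ) / ((d : ℂ) - 1))
          * (if q = (p.2, p.1) then 1 else 0) := by
  obtain ⟨i, k⟩ := p
  obtain ⟨j, l⟩ := q
  have ht : (Matrix.single i j (1:ℂ)).trace = if i = j then 1 else 0 := by
    split
    · next h => subst h; rw [Matrix.trace_single_eq_same]
    · next h => rw [Matrix.trace_single_eq_of_ne _ _ _ h]
  show Φ (Matrix.single i j 1) k l = _
  rw [hN, ht]
  by_cases h1 : i = j <;> by_cases h2 : k = l <;> by_cases h3 : i = l <;> by_cases h4 : j = k <;>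
    simp_all [Prod.ext_iff, Matrix.add_apply, Matrix.smul_apply, Matrix.sub_apply,
      Matrix.one_apply, Matrix.transpose_apply, Matrix.single, Matrix.of_apply,
      smul_eq_mul] <;> (try ring1) <;> (try (split_ifs <;> simp_all)) <;> (intros; subst_vars; simp_all)

end AuxWH

set_option maxRecDepth 8000 in
/-- The communication value of the Werner-Holevo channel
`W_{d,λ} = λΦ₀ + (1−λ)Φ₁` with `Φ₀(X) = ((Tr X)I + Xᵀ)/(d+1)` and
`Φ₁(X) = ((Tr X)I − Xᵀ)/(d−1)`. -/
theorem cv_werner_holevo (d : ℕ) (hd : 2 ≤ d) (lam : ℝ)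
    (hl0 : 0 ≤ lam) (hl1 : lam ≤ 1) (N : Channel (Fin d) (Fin d))
    (hN : ∀ X : Matrix (Fin d) (Fin d) ℂ,
      N.map X = ((lam : ℂ) / ((d : ℂ) + 1)) • (X.trace • (1 : Matrix (Fin d) (Fin d) ℂ) + Xᵀ)
        + (((1 - lam : ℝ) : ℂ) / ((d : ℂ) - 1)) •
            (X.trace • (1 : Matrix (Fin d) (Fin d) ℂ) - Xᵀ)) :
    (lam ≤ (1 + d) / (2 * d) →
      cv N = d * (d + 1 - 2 * lam) / ((d : ℝ) ^ 2 - 1)) ∧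
    ((1 + d) / (2 * d) < lam →
      cv N = 2 * d * lam / (1 + d)) := by
  obtain ⟨m, rfl⟩ : ∃ m, d = m + 2 := ⟨d - 2, by omega⟩
  have hdR : (2 : ℝ) ≤ ((m + 2 : ℕ) : ℝ) := by push_cast; linarith
  have hdp1 : (0 : ℝ) < ((m + 2 : ℕ) : ℝ) + 1 := by linarith
  have hdm1 : (0 : ℝ) < ((m + 2 : ℕ) : ℝ) - 1 := by linarith
  have hdsq : (0 : ℝ) < ((m + 2 : ℕ) : ℝ) ^ 2 - 1 := by nlinarith
  set D : ℝ := ((m + 2 : ℕ) : ℝ) with hD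
  set α : ℝ := lam / (D + 1) with hα
  set β : ℝ := (1 - lam) / (D - 1) with hβ
  have hA : (lam : ℂ) / (((m + 2 : ℕ) : ℂ) + 1) = ((α : ℝ) : ℂ) := by
    rw [hα, hD]; push_cast; ring
  have hB : ((1 - lam : ℝ) : ℂ) / (((m + 2 : ℕ) : ℂ) - 1) = ((β : ℝ) : ℂ) := by
    rw [hβ, hD]
    rw [Complex.ofReal_div]
    congr 1
    push_cast
    ring
  have hJ := wh_choi_apply (m + 2) lam N.map hN
  -- the value of the program for any feasible Ω
  have key : ∀ Ω : Matrix ((Fin (m+2)) × (Fin (m+2))) ((Fin (m+2)) × (Fin (m+2))) ℂ,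
      IsSep Ω → ptraceA Ω = 1 → ∃ u : ℝ, 0 ≤ u ∧ u ≤ D ∧
        ((Ω * choi N.map).trace).re = (α + β) * D + (α - β) * u := by
    intro Ω hsep hpt
    obtain ⟨n, a, b, ha, hb, rfl⟩ := hsep
    have htrΩ : (∑ i, a i ⊗ₖ b i : Matrix _ _ ℂ).trace = ((D : ℝ) : ℂ) := by
      have h := wh_trace_ptraceA (∑ i, a i ⊗ₖ b i)
      rw [hpt, Matrix.trace_one] at h
      rw [← h, hD]
      norm_num
    have htrΩC : (∑ i, a i ⊗ₖ b i : Matrix _ _ ℂ).trace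
        = ∑ i, (a i).trace * (b i).trace := by
      rw [Matrix.trace_sum]
      exact Finset.sum_congr rfl fun i _ => Matrix.trace_kronecker _ _
    have hsa := fun i => wh_psd_trace (ha i)
    have hsb := fun i => wh_psd_trace (hb i)
    have hd_eq : ∑ i, (a i).trace.re * (b i).trace.re = D := by
      have h1 : ((∑ i, (a i).trace.re * (b i).trace.re : ℝ) : ℂ) = ((D : ℝ) : ℂ) := by
        rw [← htrΩ, htrΩC]
        push_cast
        exact (Finset.sum_congr rfl fun i _ => by
          rw [(hsa i).1, (hsb i).1]; simp).symm
      exact_mod_cast h1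
    choose u hu0 hub huv using fun i => wh_psd_trace_mul (ha i) (hb i)
    have hswap : (∑ p : (Fin (m+2)) × (Fin (m+2)), (∑ i, a i ⊗ₖ b i) p (p.2, p.1))
        = ((∑ i, u i : ℝ) : ℂ) := by
      simp_rw [Matrix.sum_apply]
      rw [Finset.sum_comm]
      push_cast
      exact Finset.sum_congr rfl fun i _ => by rw [wh_swapsum_kron, huv]
    refine ⟨∑ i, u i, Finset.sum_nonneg fun i _ => hu0 i, ?_, ?_⟩
    · calc ∑ i, u i ≤ ∑ i, (a i).trace.re * (b i).trace.re :=
            Finset.sum_le_sum fun i _ => hub i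
        _ = D := hd_eq
    · rw [wh_traceJ _ _ _ _ hJ, htrΩ, hswap, hA, hB]
      have h2 : (((α:ℝ):ℂ) + ((β:ℝ):ℂ)) * ((D:ℝ):ℂ) + (((α:ℝ):ℂ) - ((β:ℝ):ℂ)) * ((∑ i, u i : ℝ):ℂ)
          = (((α + β) * D + (α - β) * ∑ i, u i : ℝ) : ℂ) := by
        push_cast; ring
      rw [h2, Complex.ofReal_re]
  -- witnesses
  have wit : ∀ σ : Equiv.Perm (Fin (m+2)), ∃ Ω,
      IsSep Ω ∧ ptraceA Ω = 1 ∧ ((Ω * choi N.map).trace).re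
        = (α + β) * D + (α - β) *
          (∑ s : Fin (m+2), ((Matrix.single s s (1:ℂ) *
            Matrix.single (σ s) (σ s) (1:ℂ)).trace)).re := by
    intro σ
    set E : Fin (m+2) → Matrix (Fin (m+2)) (Fin (m+2)) ℂ :=
      fun s => Matrix.single s s (1:ℂ) with hE
    refine ⟨∑ s, E s ⊗ₖ E (σ s), ⟨m+2, E, fun s => E (σ s),
      fun s => wh_psd_E s, fun s => wh_psd_E _, rfl⟩, wh_ptraceA_sumE σ, ?_⟩
    have htr : (∑ s, E s ⊗ₖ E (σ s) : Matrix _ _ ℂ).trace = ((D : ℝ) : ℂ) := by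
      rw [Matrix.trace_sum]
      simp_rw [Matrix.trace_kronecker, hE, Matrix.trace_single_eq_same]
      rw [hD]
      norm_num
    have hsw : (∑ p : (Fin (m+2)) × (Fin (m+2)), (∑ s, E s ⊗ₖ E (σ s)) p (p.2, p.1))
        = ∑ s : Fin (m+2), (E s * E (σ s)).trace := by
      simp_rw [Matrix.sum_apply]
      rw [Finset.sum_comm]
      exact Finset.sum_congr rfl fun s _ => wh_swapsum_kron _ _
    rw [wh_traceJ _ _ _ _ hJ, htr, hsw, hA, hB]
    have hre : ∀ z : ℂ, (((α:ℝ):ℂ) + ((β:ℝ):ℂ)) * ((D:ℝ):ℂ)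
        + (((α:ℝ):ℂ) - ((β:ℝ):ℂ)) * z
        = ((((α + β) * D : ℝ)) : ℂ) + (((α - β : ℝ)) : ℂ) * z := by
      intro z; push_cast; ring
    rw [hre]
    simp [Complex.add_re, Complex.mul_re, Complex.ofReal_re, Complex.ofReal_im, hE]
  -- value of identity-permutation witness
  have wit1 : ∃ Ω, IsSep Ω ∧ ptraceA Ω = 1 ∧
      ((Ω * choi N.map).trace).re = (α + β) * D + (α - β) * D := by
    obtain ⟨Ω, h1, h2, h3⟩ := wit (Equiv.refl _)
    refine ⟨Ω, h1, h2, ?_⟩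
    rw [h3]
    congr 1
    have : ∀ s : Fin (m+2), (Matrix.single s s (1:ℂ) *
        Matrix.single ((Equiv.refl (Fin (m+2))) s) ((Equiv.refl (Fin (m+2))) s)
          (1:ℂ)).trace = 1 := by
      intro s
      simp [Matrix.single_mul_single_same, Matrix.trace_single_eq_same]
    rw [Finset.sum_congr rfl fun s _ => this s]
    simp [hD]
  -- value of fixed-point-free-permutation witness
  have wit0 : ∃ Ω, IsSep Ω ∧ ptraceA Ω = 1 ∧
      ((Ω * choi N.map).trace).re = (α + β) * D := by
    obtain ⟨Ω, h1, h2, h3⟩ := wit (Equiv.addRight (1 : Fin (m+2)))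
    refine ⟨Ω, h1, h2, ?_⟩
    rw [h3]
    have hne : ∀ s : Fin (m+2), s ≠ (Equiv.addRight (1 : Fin (m+2))) s := by
      intro s h
      have h' : (Equiv.addRight (1 : Fin (m+2))) s = s + 1 := rfl
      rw [h'] at h
      have hs := congrArg Fin.val h
      rw [Fin.val_add_one] at hs
      split_ifs at hs with hlast
      · subst hlast
        simp [Fin.last] at hs
      · omega
    have hz : ∀ s : Fin (m+2), (Matrix.single s s (1:ℂ) *
        Matrix.single ((Equiv.addRight (1 : Fin (m+2))) s)
          ((Equiv.addRight (1 : Fin (m+2))) s) (1:ℂ)).trace = 0 := by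
      intro s
      rw [Matrix.single_mul_single_of_ne _ _ _ _ (hne s), Matrix.trace_zero]
    rw [Finset.sum_congr rfl fun s _ => hz s]
    simp
  -- arithmetic on the target values
  constructor
  · intro hc
    have hαβ : α - β ≤ 0 := by
      rw [hα, hβ, div_sub_div _ _ hdp1.ne' hdm1.ne']
      apply div_nonpos_of_nonpos_of_nonneg
      · have h2 : lam * (2 * D) ≤ 1 + D := by
          rw [le_div_iff₀ (by linarith : (0:ℝ) < 2 * D)] at hc
          linarith [hc]
        nlinarith
      · nlinarith
    have hT : D * (D + 1 - 2 * lam) / (D ^ 2 - 1) = (α + β) * D := by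
      rw [hα, hβ]
      field_simp
      ring
    show cv N = D * (D + 1 - 2 * lam) / (D ^ 2 - 1)
    rw [hT]
    unfold cv
    apply IsGreatest.csSup_eq
    constructor
    · obtain ⟨Ω, h1, h2, h3⟩ := wit0
      exact ⟨Ω, h1, h2, h3.symm⟩
    · rintro r ⟨Ω, hsep, hpt, rfl⟩
      obtain ⟨u, hu0, hud, hval⟩ := key Ω hsep hpt
      rw [hval]
      nlinarith [mul_nonneg (neg_nonneg.mpr hαβ) hu0]
  · intro hc
    have hαβ : 0 ≤ α - β := by
      rw [hα, hβ, div_sub_div _ _ hdp1.ne' hdm1.ne']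
      apply div_nonneg
      · have h2 : 1 + D ≤ lam * (2 * D) := by
          rw [div_lt_iff₀ (by linarith : (0:ℝ) < 2 * D)] at hc
          linarith [hc]
        nlinarith
      · nlinarith
    have hT : 2 * D * lam / (1 + D) = (α + β) * D + (α - β) * D := by
      rw [hα, hβ]
      field_simp
      ring
    show cv N = 2 * D * lam / (1 + D)
    rw [hT]
    unfold cv
    apply IsGreatest.csSup_eq
    constructor
    · obtain ⟨Ω, h1, h2, h3⟩ := wit1
      exact ⟨Ω, h1, h2, h3.symm⟩
    · rintro r ⟨Ω, hsep, hpt, rfl⟩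
      obtain ⟨u, hu0, hud, hval⟩ := key Ω hsep hpt
      rw [hval]
      nlinarith [mul_le_mul_of_nonneg_left hud hαβ]
end
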